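/- arXiv:1307.4308 — 11 statements merged into one kernel-verified Lean document; each statement's English description precedes it below -/
import Mathlib

section
/- There is a constant K > 0 such that for all integers p, q with 0 < q < p, | ln C(p,q) − q·(ln(p/q) + 1 − S(q/p)) − (1/2)·ln( p / (2π·q·(p−q)) ) | ≤ K / min(q, p−q). -/
set_option maxHeartbeats 1000000

open Real

/-- `S x = ∑_{j ≥ 1} x^j / (j (j+1))`. -/
noncomputable def S (x : ℝ) : ℝ := ∑' j : ℕ, x ^ (j + 1) / ((j + 1) * (j + 2))

section Aux
open Stirling Filter

lemma S_eq {x : ℝ} (hx0 : 0 < x) (hx1 : x < 1) :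
    S x = 1 + ((1 - x) / x) * Real.log (1 - x) := by
  have habs : |x| < 1 := by rw [abs_of_pos hx0]; exact hx1
  have h1 : HasSum (fun n : ℕ => x ^ (n + 1) / (n + 1)) (-Real.log (1 - x)) :=
    Real.hasSum_pow_div_log_of_abs_lt_one habs
  have h2 : HasSum (fun n : ℕ => x ^ (n + 2) / (n + 2)) (-Real.log (1 - x) - x) := by
    have h := (hasSum_nat_add_iff' (f := fun n : ℕ => x ^ (n + 1) / ((n : ℝ) + 1)) 1).mpr h1
    simp only [Finset.range_one, Finset.sum_singleton] at h
    convert h using 1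
    · rfl
    · funext n; push_cast; ring_nf
    · norm_num
  have h3 : HasSum (fun n : ℕ => x ^ (n + 1) / (n + 2)) ((-Real.log (1 - x) - x) / x) := by
    have h := h2.mul_left (1 / x)
    have he : (fun n : ℕ => 1 / x * (x ^ (n + 2) / ((n : ℝ) + 2)))
        = fun n : ℕ => x ^ (n + 1) / ((n : ℝ) + 2) := by
      funext n; field_simp; ring
    rw [he] at h
    convert h using 1
    · rfl
    · field_simp
  have h4 : HasSum (fun n : ℕ => x ^ (n + 1) / ((n + 1) * (n + 2)))
      (-Real.log (1 - x) - (-Real.log (1 - x) - x) / x) := by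
    convert h1.sub h3 using 1
    · rfl
    funext n
    have hn1 : ((n : ℝ) + 1) ≠ 0 := by positivity
    have hn2 : ((n : ℝ) + 2) ≠ 0 := by positivity
    field_simp
    ring
  rw [S, h4.tsum_eq]
  field_simp
  ring

lemma log_stirling_tendsto :
    Tendsto (fun m : ℕ => Real.log (stirlingSeq m)) atTop
      (nhds (Real.log (Real.sqrt π))) :=
  (tendsto_stirlingSeq_sqrt_pi).log (Real.sqrt_pos.mpr Real.pi_pos).ne'

lemma log_sqrtpi_le (n : ℕ) (hn : 1 ≤ n) :
    Real.log (Real.sqrt π) ≤ Real.log (stirlingSeq n) := by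
  refine le_of_tendsto log_stirling_tendsto ?_
  filter_upwards [eventually_ge_atTop n] with m hm
  obtain ⟨n', rfl⟩ := Nat.exists_eq_add_of_le hn
  obtain ⟨m', rfl⟩ := Nat.exists_eq_add_of_le hm
  have := log_stirlingSeq'_antitone (Nat.le_add_right n' m')
  simp only [Function.comp, Nat.succ_eq_add_one] at this
  convert this using 3 <;> omega

lemma log_le_sqrtpi_add (n : ℕ) (hn : 1 ≤ n) :
    Real.log (stirlingSeq n) ≤ Real.log (Real.sqrt π) + 1 / (2 * n) := by
  have key : ∀ m : ℕ, Real.log (stirlingSeq n) - Real.log (stirlingSeq (n + m))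
      ≤ 1 / (2 * (n : ℝ)) := by
    intro m
    have htel : ∑ k ∈ Finset.range m,
        (Real.log (stirlingSeq (n + k)) - Real.log (stirlingSeq (n + k + 1)))
        = Real.log (stirlingSeq n) - Real.log (stirlingSeq (n + m)) := by
      simpa [← add_assoc] using Finset.sum_range_sub' (fun k => Real.log (stirlingSeq (n + k))) m
    have htel2 : ∑ k ∈ Finset.range m,
        (1 / (2 * ((n : ℝ) + k)) - 1 / (2 * ((n : ℝ) + (k + 1))))
        = 1 / (2 * (n : ℝ)) - 1 / (2 * ((n : ℝ) + m)) := by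
      simpa using Finset.sum_range_sub' (fun k => 1 / (2 * ((n : ℝ) + k))) m
    rw [← htel]
    have hterm : ∀ k : ℕ, Real.log (stirlingSeq (n + k)) - Real.log (stirlingSeq (n + k + 1))
        ≤ 1 / (2 * ((n : ℝ) + k)) - 1 / (2 * ((n : ℝ) + (k + 1))) := by
      intro k
      obtain ⟨j, hj⟩ : ∃ j, n + k = j + 1 := ⟨n + k - 1, by omega⟩
      have hb := log_stirlingSeq_sub_log_stirlingSeq_succ (j + 1)
      rw [hj]
      have hc : ((n : ℝ) + k) = (j : ℝ) + 1 := by exact_mod_cast hj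
      rw [hc]
      refine hb.trans ?_
      have h2 : (0:ℝ) < (j:ℝ) + 1 := by positivity
      have h3 : (0:ℝ) < (j:ℝ) + 2 := by positivity
      rw [div_sub_div _ _ (by positivity) (by positivity),
        div_le_div_iff₀ (by positivity) (by positivity)]
      push_cast
      nlinarith [sq_nonneg ((j:ℝ)), Nat.cast_nonneg (α := ℝ) j]
    calc ∑ k ∈ Finset.range m,
        (Real.log (stirlingSeq (n + k)) - Real.log (stirlingSeq (n + k + 1)))
        ≤ ∑ k ∈ Finset.range m,
          (1 / (2 * ((n : ℝ) + k)) - 1 / (2 * ((n : ℝ) + (k + 1)))) :=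
          Finset.sum_le_sum fun k _ => hterm k
      _ = 1 / (2 * (n : ℝ)) - 1 / (2 * ((n : ℝ) + m)) := htel2
      _ ≤ 1 / (2 * (n : ℝ)) := by
          have : (0:ℝ) ≤ 1 / (2 * ((n : ℝ) + m)) := by positivity
          linarith
  have htend : Tendsto (fun m : ℕ => Real.log (stirlingSeq n) - Real.log (stirlingSeq (n + m)))
      atTop (nhds (Real.log (stirlingSeq n) - Real.log (Real.sqrt π))) :=
    tendsto_const_nhds.sub ((log_stirling_tendsto.comp (tendsto_add_atTop_nat n)).congr
      (fun m => by simp [Nat.add_comm]))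
  have := le_of_tendsto htend (Filter.Eventually.of_forall key)
  linarith

lemma log_factorial_eq (n : ℕ) (hn : 1 ≤ n) :
    Real.log n.factorial = n * Real.log n - n
      + (1 / 2) * (Real.log (2 * π) + Real.log n)
      + (Real.log (stirlingSeq n) - Real.log (Real.sqrt π)) := by
  have hn0 : (0:ℝ) < (n:ℝ) := by exact_mod_cast hn
  have h := log_stirlingSeq_formula n
  have h2n : Real.log (2 * (n:ℝ)) = Real.log 2 + Real.log n :=
    Real.log_mul two_ne_zero hn0.ne'
  have hne : Real.log ((n:ℝ) / Real.exp 1) = Real.log n - 1 := by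
    rw [Real.log_div hn0.ne' (Real.exp_ne_zero 1), Real.log_exp]
  have h2π : Real.log (2 * π) = Real.log 2 + Real.log π :=
    Real.log_mul two_ne_zero Real.pi_pos.ne'
  have hsqrt : Real.log (Real.sqrt π) = (1/2) * Real.log π := by
    rw [Real.log_sqrt Real.pi_pos.le]; ring
  rw [h2n, hne] at h
  rw [h2π, hsqrt]
  linarith
end Aux

theorem stmt_0 :
    ∃ K : ℝ, 0 < K ∧ ∀ p q : ℕ, 0 < q → q < p →
      |Real.log (p.choose q) -
          (q : ℝ) * (Real.log ((p : ℝ) / q) + 1 - S ((q : ℝ) / p)) -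
          (1 / 2) * Real.log ((p : ℝ) / (2 * Real.pi * q * (p - q)))| ≤
        K / (min q (p - q) : ℕ) := by
  refine ⟨2, by norm_num, fun p q hq hqp => ?_⟩
  set d : ℕ := p - q with hd_def
  have hd : 0 < d := by omega
  have hp : 0 < p := lt_trans hq hqp
  have hP : (0:ℝ) < (p:ℝ) := by exact_mod_cast hp
  have hQ : (0:ℝ) < (q:ℝ) := by exact_mod_cast hq
  have hD : (0:ℝ) < (d:ℝ) := by exact_mod_cast hd
  have hDR : ((d:ℕ):ℝ) = (p:ℝ) - q := by
    rw [hd_def]; push_cast [Nat.cast_sub hqp.le]; ring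
  -- log of choose
  have hcf : ((p.choose q : ℕ) : ℝ) * (q.factorial : ℝ) * (d.factorial : ℝ) = (p.factorial : ℝ) := by
    have hcf0 := Nat.choose_mul_factorial_mul_factorial hqp.le
    rw [← hd_def] at hcf0
    exact_mod_cast hcf0
  have hch : (0:ℝ) < ((p.choose q : ℕ) : ℝ) := by
    exact_mod_cast Nat.choose_pos hqp.le
  have hqf : (0:ℝ) < ((q.factorial : ℕ) : ℝ) := by exact_mod_cast q.factorial_pos
  have hdf : (0:ℝ) < ((d.factorial : ℕ) : ℝ) := by exact_mod_cast d.factorial_pos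
  have hchoose : Real.log (p.choose q)
      = Real.log p.factorial - Real.log q.factorial - Real.log d.factorial := by
    rw [← hcf, Real.log_mul (by positivity) hdf.ne', Real.log_mul hch.ne' hqf.ne']
    ring
  -- S value
  have hx0 : (0:ℝ) < (q:ℝ)/p := by positivity
  have hx1 : (q:ℝ)/p < 1 := (div_lt_one hP).mpr (by exact_mod_cast hqp)
  have h1x : 1 - (q:ℝ)/p = (d:ℝ)/p := by rw [hDR]; field_simp
  have hS : S ((q:ℝ)/p) = 1 + ((d:ℝ)/q) * (Real.log d - Real.log p) := by
    rw [S_eq hx0 hx1, h1x]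
    rw [Real.log_div hD.ne' hP.ne']
    congr 1
    congr 1
    field_simp
  -- log expansions
  have hlogPQ : Real.log ((p:ℝ)/q) = Real.log p - Real.log q :=
    Real.log_div hP.ne' hQ.ne'
  have hlogbig : Real.log ((p:ℝ) / (2 * π * q * ((p:ℝ) - q)))
      = Real.log p - (Real.log (2 * π) + Real.log q + Real.log d) := by
    rw [← hDR]
    rw [show (2 * π * (q:ℝ) * (d:ℝ)) = (2 * π) * ((q:ℝ) * (d:ℝ)) by ring]
    rw [Real.log_div hP.ne' (by positivity),
      Real.log_mul (by positivity) (by positivity),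
      Real.log_mul hQ.ne' hD.ne']
    ring
  have hfp := log_factorial_eq p hp
  have hfq := log_factorial_eq q hq
  have hfd := log_factorial_eq d hd
  -- the expression equals the sum of Stirling remainders
  have hE : Real.log (p.choose q) -
      (q : ℝ) * (Real.log ((p : ℝ) / q) + 1 - S ((q : ℝ) / p)) -
      (1 / 2) * Real.log ((p : ℝ) / (2 * Real.pi * q * ((p:ℝ) - q)))
      = (Real.log (Stirling.stirlingSeq p) - Real.log (Real.sqrt π))
        - (Real.log (Stirling.stirlingSeq q) - Real.log (Real.sqrt π))
        - (Real.log (Stirling.stirlingSeq d) - Real.log (Real.sqrt π)) := by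
    rw [hchoose, hfp, hfq, hfd, hS, hlogPQ, hlogbig, hDR]
    field_simp
    ring
  rw [hE]
  -- remainder bounds
  have hrp0 := log_sqrtpi_le p hp
  have hrq0 := log_sqrtpi_le q hq
  have hrd0 := log_sqrtpi_le d hd
  have hrp1 := log_le_sqrtpi_add p hp
  have hrq1 := log_le_sqrtpi_add q hq
  have hrd1 := log_le_sqrtpi_add d hd
  set m : ℕ := min q d with hm_def
  have hm : 0 < m := lt_min hq hd
  have hM : (0:ℝ) < (m:ℝ) := by exact_mod_cast hm
  have hmq : (m:ℝ) ≤ (q:ℝ) := by exact_mod_cast min_le_left q d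
  have hmd : (m:ℝ) ≤ (d:ℝ) := by exact_mod_cast min_le_right q d
  have hmp : (m:ℝ) ≤ (p:ℝ) := by
    have : m ≤ p := le_trans (min_le_left q d) hqp.le
    exact_mod_cast this
  have b1 : 1 / (2 * (p:ℝ)) ≤ 1 / (2 * (m:ℝ)) := by gcongr
  have b2 : 1 / (2 * (q:ℝ)) ≤ 1 / (2 * (m:ℝ)) := by gcongr
  have b3 : 1 / (2 * (d:ℝ)) ≤ 1 / (2 * (m:ℝ)) := by gcongr
  have hhalf : 1 / (2 * (m:ℝ)) ≤ 2 / (m:ℝ) := by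
    rw [div_le_div_iff₀ (by positivity) hM]
    nlinarith
  have hsum : 1 / (2*(m:ℝ)) + 1 / (2*(m:ℝ)) ≤ 2 / (m:ℝ) := by
    have he : 1 / (2*(m:ℝ)) + 1 / (2*(m:ℝ)) = 1/(m:ℝ) := by
      field_simp
      norm_num
    rw [he, div_le_div_iff₀ hM hM]; nlinarith
  rw [abs_le]
  refine ⟨by linarith only [hrp0, hrq1, hrd1, b2, b3, hsum], ?_⟩
  linarith only [hrp1, hrq0, hrd0, b1, hhalf]
end

section
/- There is a constant K > 0 such that for all positive integers p, q, r with 1 ≤ r ≤ p+q−1 and (p+q) dividing r·p, one has | ln C(p+q, r) − ln C(p, r·p/(p+q)) − ln C(q, r·q/(p+q)) | ≤ K·ln(p+q). -/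
/-- Step-up: the Vandermonde term increases when the cross-multiplied condition holds. -/
lemma t_step_up (p q r k : ℕ) (hk : k < r)
    (h : (k + 1) * (q - (r - (k + 1))) ≤ (p - k) * (r - k)) :
    p.choose k * q.choose (r - k) ≤ p.choose (k + 1) * q.choose (r - (k + 1)) := by
  have e1 : p.choose (k + 1) * (k + 1) = p.choose k * (p - k) :=
    Nat.choose_succ_right_eq p k
  have e2 : q.choose (r - k) * (r - k) = q.choose (r - (k + 1)) * (q - (r - (k + 1))) := by
    have hr : r - k = (r - (k + 1)) + 1 := by omega
    rw [hr, Nat.choose_succ_right_eq]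
  have hpos : 0 < (k + 1) * (r - k) := Nat.mul_pos (Nat.succ_pos k) (by omega)
  refine Nat.le_of_mul_le_mul_right ?_ hpos
  calc p.choose k * q.choose (r - k) * ((k + 1) * (r - k))
      = (p.choose k * (k + 1)) * (q.choose (r - k) * (r - k)) := by ring
    _ = (p.choose k * (k + 1)) * (q.choose (r - (k + 1)) * (q - (r - (k + 1)))) := by rw [e2]
    _ = (p.choose k * q.choose (r - (k + 1))) * ((k + 1) * (q - (r - (k + 1)))) := by ring
    _ ≤ (p.choose k * q.choose (r - (k + 1))) * ((p - k) * (r - k)) :=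
        Nat.mul_le_mul_left _ h
    _ = (p.choose k * (p - k)) * (q.choose (r - (k + 1)) * (r - k)) := by ring
    _ = (p.choose (k + 1) * (k + 1)) * (q.choose (r - (k + 1)) * (r - k)) := by rw [e1]
    _ = p.choose (k + 1) * q.choose (r - (k + 1)) * ((k + 1) * (r - k)) := by ring

/-- Step-down: the Vandermonde term decreases when the reverse condition holds. -/
lemma t_step_down (p q r k : ℕ) (hk : k < r)
    (h : (p - k) * (r - k) ≤ (k + 1) * (q - (r - (k + 1)))) :
    p.choose (k + 1) * q.choose (r - (k + 1)) ≤ p.choose k * q.choose (r - k) := by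
  have e1 : p.choose (k + 1) * (k + 1) = p.choose k * (p - k) :=
    Nat.choose_succ_right_eq p k
  have e2 : q.choose (r - k) * (r - k) = q.choose (r - (k + 1)) * (q - (r - (k + 1))) := by
    have hr : r - k = (r - (k + 1)) + 1 := by omega
    rw [hr, Nat.choose_succ_right_eq]
  have hpos : 0 < (k + 1) * (r - k) := Nat.mul_pos (Nat.succ_pos k) (by omega)
  refine Nat.le_of_mul_le_mul_right ?_ hpos
  calc p.choose (k + 1) * q.choose (r - (k + 1)) * ((k + 1) * (r - k))
      = (p.choose (k + 1) * (k + 1)) * (q.choose (r - (k + 1)) * (r - k)) := by ring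
    _ = (p.choose k * (p - k)) * (q.choose (r - (k + 1)) * (r - k)) := by rw [e1]
    _ = (p.choose k * q.choose (r - (k + 1))) * ((p - k) * (r - k)) := by ring
    _ ≤ (p.choose k * q.choose (r - (k + 1))) * ((k + 1) * (q - (r - (k + 1)))) :=
        Nat.mul_le_mul_left _ h
    _ = (p.choose k * (k + 1)) * (q.choose (r - (k + 1)) * (q - (r - (k + 1)))) := by ring
    _ = (p.choose k * (k + 1)) * (q.choose (r - k) * (r - k)) := by rw [e2]
    _ = p.choose k * q.choose (r - k) * ((k + 1) * (r - k)) := by ring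

theorem stmt_2 :
    ∃ K : ℝ, 0 < K ∧ ∀ p q r : ℕ, 0 < p → 0 < q → 1 ≤ r → r ≤ p + q - 1 →
      (p + q) ∣ r * p →
      |Real.log ((p + q).choose r) - Real.log (p.choose (r * p / (p + q))) -
          Real.log (q.choose (r * q / (p + q)))| ≤ K * Real.log (p + q) := by
  refine ⟨1, one_pos, ?_⟩
  intro p q r hp hq hr1 hr2 hdvd
  set a := r * p / (p + q) with ha_def
  have hpq : 0 < p + q := by omega
  have haeq : a * (p + q) = r * p := Nat.div_mul_cancel hdvd
  have har : a ≤ r := by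
    have : a * (p + q) ≤ r * (p + q) := by
      rw [haeq]; exact Nat.mul_le_mul_left r (by omega)
    exact Nat.le_of_mul_le_mul_right this hpq
  set b := r - a with hb_def
  have hbeq : b * (p + q) = r * q := by
    rw [hb_def, Nat.sub_mul, haeq, Nat.mul_add, Nat.add_sub_cancel_left]
  have hbq_div : r * q / (p + q) = b := Nat.div_eq_of_eq_mul_left hpq hbeq.symm
  have hap : a ≤ p := by
    have : a * (p + q) ≤ p * (p + q) := by
      rw [haeq, Nat.mul_comm p (p + q)]
      exact Nat.mul_le_mul_right p (by omega)
    exact Nat.le_of_mul_le_mul_right this hpq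
  have hbq : b ≤ q := by
    have : b * (p + q) ≤ q * (p + q) := by
      rw [hbeq, Nat.mul_comm q (p + q)]
      exact Nat.mul_le_mul_right q (by omega)
    exact Nat.le_of_mul_le_mul_right this hpq
  have haqbp : a * q = b * p := by
    have h1 : a * p + a * q = r * p := by rw [← Nat.mul_add]; exact haeq
    calc a * q = (a * p + a * q) - a * p := by omega
      _ = r * p - a * p := by rw [h1]
      _ = (r - a) * p := by rw [Nat.sub_mul]
      _ = b * p := rfl
  have hz : (a : ℤ) * q = b * p := by exact_mod_cast haqbp
  have hkey : a * (q - b) = (p - a) * b := by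
    zify [hbq, hap]
    linear_combination hz
  -- unimodality: the term at k = a dominates
  have up : ∀ d, d ≤ a → p.choose (a - d) * q.choose (r - (a - d)) ≤
      p.choose a * q.choose (r - a) := by
    intro d hd
    induction d with
    | zero => simp
    | succ n ih =>
      have hn : n ≤ a := by omega
      set k := a - (n + 1) with hk_def
      have hk1 : k + 1 = a - n := by omega
      have hka : k < a := by omega
      have hkr : k < r := by omega
      have hcond : (k + 1) * (q - (r - (k + 1))) ≤ (p - k) * (r - k) := by
        have h1 : (k + 1) * (q - (r - (k + 1))) ≤ a * (q - b) := by
          apply Nat.mul_le_mul (by omega)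
          omega
        have h2 : (p - a) * b ≤ (p - k) * (r - k) := by
          apply Nat.mul_le_mul <;> omega
        omega
      calc p.choose k * q.choose (r - k) ≤ p.choose (k + 1) * q.choose (r - (k + 1)) :=
            t_step_up p q r k hkr hcond
        _ = p.choose (a - n) * q.choose (r - (a - n)) := by rw [hk1]
        _ ≤ p.choose a * q.choose (r - a) := ih hn
  have down : ∀ d, a + d ≤ r → p.choose (a + d) * q.choose (r - (a + d)) ≤
      p.choose a * q.choose (r - a) := by
    intro d hd
    induction d with
    | zero => simp
    | succ n ih =>
      have hn : a + n ≤ r := by omega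
      set k := a + n with hk_def
      have hkr : k < r := by omega
      have hcond : (p - k) * (r - k) ≤ (k + 1) * (q - (r - (k + 1))) := by
        have h1 : (p - k) * (r - k) ≤ (p - a) * b := by
          apply Nat.mul_le_mul <;> omega
        have h2 : a * (q - b) ≤ (k + 1) * (q - (r - (k + 1))) := by
          apply Nat.mul_le_mul (by omega)
          omega
        omega
      calc p.choose (a + (n + 1)) * q.choose (r - (a + (n + 1)))
          = p.choose (k + 1) * q.choose (r - (k + 1)) := by
            rw [show a + (n + 1) = k + 1 from by omega]
        _ ≤ p.choose k * q.choose (r - k) := t_step_down p q r k hkr hcond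
        _ ≤ p.choose a * q.choose (r - a) := ih hn
  have hmax : ∀ k ∈ Finset.range (r + 1),
      p.choose k * q.choose (r - k) ≤ p.choose a * q.choose b := by
    intro k hk
    simp only [Finset.mem_range] at hk
    have hrb : r - a = b := rfl
    rw [← hrb]
    rcases le_or_gt k a with h | h
    · have := up (a - k) (by omega)
      rwa [show a - (a - k) = k by omega] at this
    · have := down (k - a) (by omega)
      rwa [show a + (k - a) = k by omega] at this
  have hv : (p + q).choose r = ∑ k ∈ Finset.range (r + 1), p.choose k * q.choose (r - k) := by
    rw [Nat.add_choose_eq, Finset.Nat.sum_antidiagonal_eq_sum_range_succ_mk]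
  have hlowN : p.choose a * q.choose b ≤ (p + q).choose r := by
    rw [hv]
    have hmem : a ∈ Finset.range (r + 1) := Finset.mem_range.mpr (by omega)
    have := Finset.single_le_sum (f := fun k => p.choose k * q.choose (r - k))
      (fun i _ => Nat.zero_le _) hmem
    simpa using this
  have hupN : (p + q).choose r ≤ (p + q) * (p.choose a * q.choose b) := by
    rw [hv]
    calc ∑ k ∈ Finset.range (r + 1), p.choose k * q.choose (r - k)
        ≤ (r + 1) * (p.choose a * q.choose b) := by
          have := Finset.sum_le_card_nsmul (Finset.range (r + 1))
            (fun k => p.choose k * q.choose (r - k)) (p.choose a * q.choose b) hmax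
          simpa [Finset.card_range, smul_eq_mul] using this
      _ ≤ (p + q) * (p.choose a * q.choose b) :=
          Nat.mul_le_mul_right _ (by omega)
  -- pass to reals
  rw [hbq_div]
  have hx1 : (1 : ℝ) ≤ (p.choose a : ℝ) := by
    exact_mod_cast Nat.one_le_iff_ne_zero.mpr (Nat.choose_pos hap).ne'
  have hy1 : (1 : ℝ) ≤ (q.choose b : ℝ) := by
    exact_mod_cast Nat.one_le_iff_ne_zero.mpr (Nat.choose_pos hbq).ne'
  have hxy : (1 : ℝ) ≤ (p.choose a : ℝ) * (q.choose b : ℝ) := one_le_mul_of_one_le_of_one_le hx1 hy1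
  have hlowR : (p.choose a : ℝ) * (q.choose b : ℝ) ≤ ((p + q).choose r : ℝ) := by
    exact_mod_cast hlowN
  have hupR : ((p + q).choose r : ℝ) ≤ (p + q : ℝ) * ((p.choose a : ℝ) * (q.choose b : ℝ)) := by
    exact_mod_cast hupN
  have hlogmul : Real.log ((p.choose a : ℝ) * (q.choose b : ℝ))
      = Real.log (p.choose a) + Real.log (q.choose b) :=
    Real.log_mul (by linarith) (by linarith)
  have hpqR : (1 : ℝ) ≤ (p + q : ℝ) := by exact_mod_cast hpq
  have hlogpq : 0 ≤ Real.log ((p : ℝ) + q) := Real.log_nonneg (by exact_mod_cast hpqR)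
  rw [abs_le]
  constructor
  · have h0 : Real.log ((p.choose a : ℝ) * (q.choose b : ℝ)) ≤ Real.log ((p + q).choose r) :=
      Real.log_le_log (by linarith) hlowR
    rw [hlogmul] at h0
    push_cast
    linarith
  · have h1 : Real.log ((p + q).choose r) ≤
        Real.log ((p + q : ℝ) * ((p.choose a : ℝ) * (q.choose b : ℝ))) :=
      Real.log_le_log (by linarith) hupR
    have h2 : Real.log ((p + q : ℝ) * ((p.choose a : ℝ) * (q.choose b : ℝ)))
        = Real.log ((p + q : ℝ)) + Real.log ((p.choose a : ℝ) * (q.choose b : ℝ)) :=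
      Real.log_mul (by linarith) (by linarith)
    rw [h2, hlogmul] at h1
    push_cast at h1 ⊢
    linarith
end

section
/- For all integers n, m, l with m ≥ 1, l ≥ 1 and l + m ≤ n, one has C(n−m, l) ≤ C(n, l)·e^{−l·m/n}. -/
lemma desc_key (l n m : ℕ) :
    (n - m).descFactorial l * n ^ l ≤ n.descFactorial l * (n - m) ^ l := by
  induction l with
  | zero => simp
  | succ l ih =>
    rw [Nat.descFactorial_succ, Nat.descFactorial_succ, pow_succ, pow_succ]
    have h1 : (n - m - l) * n ≤ (n - l) * (n - m) := by
      rcases le_or_gt n (m + l) with h | h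
      · have : n - m - l = 0 := by omega
        simp [this]
      · obtain ⟨a, ha⟩ : ∃ a, n = a + m + l := ⟨n - m - l, by omega⟩
        have e1 : n - m - l = a := by omega
        have e2 : n - l = a + m := by omega
        have e3 : n - m = a + l := by omega
        rw [e1, e2, e3, ha]
        nlinarith
    set z := n - m with hz
    set x := n - m - l with hx
    set y := n - l with hy
    set D1 := z.descFactorial l with hD1
    set D2 := n.descFactorial l with hD2
    calc x * D1 * (n ^ l * n) = (x * n) * (D1 * n ^ l) := by ring
      _ ≤ (y * z) * (D2 * z ^ l) := Nat.mul_le_mul h1 ih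
      _ = y * D2 * (z ^ l * z) := by ring

lemma choose_key (l n m : ℕ) :
    (n - m).choose l * n ^ l ≤ n.choose l * (n - m) ^ l := by
  have h := desc_key l n m
  rw [Nat.descFactorial_eq_factorial_mul_choose, Nat.descFactorial_eq_factorial_mul_choose,
    mul_assoc, mul_assoc] at h
  exact Nat.le_of_mul_le_mul_left h (Nat.factorial_pos l)

theorem stmt_3 (n m l : ℕ) (hm : 1 ≤ m) (hl : 1 ≤ l) (hlmn : l + m ≤ n) :
    ((n - m).choose l : ℝ) ≤ (n.choose l : ℝ) * Real.exp (-((l : ℝ) * m / n)) := by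
  have hn : 0 < n := by omega
  have hnR : (0 : ℝ) < n := by exact_mod_cast hn
  have hmn : m ≤ n := by omega
  have hkey : ((n - m).choose l : ℝ) * (n : ℝ) ^ l ≤ (n.choose l : ℝ) * ((n - m : ℕ) : ℝ) ^ l := by
    exact_mod_cast choose_key l n m
  have hsub : ((n - m : ℕ) : ℝ) = (n : ℝ) - m := by
    rw [Nat.cast_sub hmn]
  have h1 : ((n - m).choose l : ℝ) ≤ (n.choose l : ℝ) * (1 - (m : ℝ) / n) ^ l := by
    have hdiv : (1 - (m : ℝ) / n) = ((n : ℝ) - m) / n := by field_simp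
    rw [hdiv, div_pow, ← mul_div_assoc, le_div_iff₀ (by positivity), ← hsub]
    exact hkey
  have h2 : (1 - (m : ℝ) / n) ^ l ≤ Real.exp (-((m : ℝ) / n)) ^ l := by
    apply pow_le_pow_left₀
    · have : (m : ℝ) / n ≤ 1 := by
        rw [div_le_one hnR]; exact_mod_cast hmn
      linarith
    · have := Real.add_one_le_exp (-((m : ℝ) / n))
      linarith
  have h3 : Real.exp (-((m : ℝ) / n)) ^ l = Real.exp (-((l : ℝ) * m / n)) := by
    rw [← Real.exp_nat_mul]
    ring_nf
  calc ((n - m).choose l : ℝ) ≤ (n.choose l : ℝ) * (1 - (m : ℝ) / n) ^ l := h1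
    _ ≤ (n.choose l : ℝ) * Real.exp (-((m : ℝ) / n)) ^ l :=
        mul_le_mul_of_nonneg_left h2 (by positivity)
    _ = (n.choose l : ℝ) * Real.exp (-((l : ℝ) * m / n)) := by rw [h3]
end

section
/- There is a constant K > 0 such that for all integers l, m, j with 1 ≤ j ≤ m and m² ≤ l, one has ln( C(l−m, m−j)·C(m, j) ) ≤ ln C(l, m) − j·ln( j·l/m² ) + j + ln j + K. -/
/-- Key combinatorial lemma: `C(l-j, m-j) * l^j ≤ C(l, m) * m^j` for `j ≤ m ≤ l`. -/
lemma claimA (l m : ℕ) (hml : m ≤ l) : ∀ j, j ≤ m → (l - j).choose (m - j) * l ^ j ≤ l.choose m * m ^ j := by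
  intro j
  induction j with
  | zero => intro _; simp
  | succ j ih =>
    intro hjm
    have hj : j ≤ m := Nat.le_of_succ_le hjm
    have hjl : j < l := lt_of_lt_of_le hjm hml
    have key : (l - (j+1)).choose (m - (j+1)) * l ≤ (l - j).choose (m - j) * m := by
      have hlj : l - j = (l - (j+1)) + 1 := by omega
      have hmj : m - j = (m - (j+1)) + 1 := by omega
      have hmul := Nat.add_one_mul_choose_eq (l - (j+1)) (m - (j+1))
      -- (l-j) * C(l-j-1, m-j-1) = C(l-j, m-j) * (m-j)
      have hid : (l - j) * (l - (j+1)).choose (m - (j+1)) = (l - j).choose (m - j) * (m - j) := by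
        rw [hlj, hmj]; exact hmul
      have hpos : 0 < l - j := by omega
      apply Nat.le_of_mul_le_mul_left _ hpos
      calc (l - j) * ((l - (j+1)).choose (m - (j+1)) * l)
          = ((l - j) * (l - (j+1)).choose (m - (j+1))) * l := by ring
        _ = (l - j).choose (m - j) * ((m - j) * l) := by rw [hid]; ring
        _ ≤ (l - j).choose (m - j) * ((l - j) * m) := by
            apply Nat.mul_le_mul_left
            rw [Nat.sub_mul, Nat.sub_mul, mul_comm l m]
            exact Nat.sub_le_sub_left (Nat.mul_le_mul_left j hml) _
        _ = (l - j) * ((l - j).choose (m - j) * m) := by ring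
    calc (l - (j+1)).choose (m - (j+1)) * l ^ (j+1)
        = ((l - (j+1)).choose (m - (j+1)) * l) * l ^ j := by ring
      _ ≤ ((l - j).choose (m - j) * m) * l ^ j := Nat.mul_le_mul_right _ key
      _ = ((l - j).choose (m - j) * l ^ j) * m := by ring
      _ ≤ (l.choose m * m ^ j) * m := Nat.mul_le_mul_right _ (ih hj)
      _ = l.choose m * m ^ (j+1) := by ring

theorem stmt_5 :
    ∃ K : ℝ, 0 < K ∧ ∀ l m j : ℕ, 1 ≤ j → j ≤ m → m ^ 2 ≤ l →
      Real.log (((l - m).choose (m - j) : ℝ) * (m.choose j : ℝ)) ≤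
        Real.log (l.choose m) - (j : ℝ) * Real.log ((j : ℝ) * l / (m : ℝ) ^ 2)
          + j + Real.log j + K := by
  refine ⟨1, one_pos, fun l m j hj hjm hml => ?_⟩
  have hm1 : 1 ≤ m := le_trans hj hjm
  have hmm : m ≤ l := le_trans (Nat.le_self_pow two_ne_zero m) hml
  -- positivity facts
  have hm0 : (0:ℝ) < m := by exact_mod_cast hm1
  have hj0 : (0:ℝ) < j := by exact_mod_cast hj
  have hl0 : (0:ℝ) < l := lt_of_lt_of_le hm0 (by exact_mod_cast hmm)
  have hsub : m - j ≤ l - m := by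
    have h2 : 2 * m ≤ m ^ 2 + 1 := by zify; nlinarith [sq_nonneg ((m:ℤ) - 1)]
    have h3 : 2 * m ≤ l + j := le_trans h2 (Nat.add_le_add hml hj)
    omega
  have hA : 0 < (l - m).choose (m - j) := Nat.choose_pos hsub
  have hB : 0 < m.choose j := Nat.choose_pos hjm
  have hC : 0 < l.choose m := Nat.choose_pos hmm
  have hA0 : (0:ℝ) < ((l - m).choose (m - j) : ℝ) := by exact_mod_cast hA
  have hB0 : (0:ℝ) < (m.choose j : ℝ) := by exact_mod_cast hB
  have hC0 : (0:ℝ) < (l.choose m : ℝ) := by exact_mod_cast hC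
  -- Claim A with choose monotonicity: C(l-m, m-j) * l^j ≤ C(l,m) * m^j
  have hnat : (l - m).choose (m - j) * l ^ j ≤ l.choose m * m ^ j := by
    calc (l - m).choose (m - j) * l ^ j
        ≤ (l - j).choose (m - j) * l ^ j :=
          Nat.mul_le_mul_right _ (Nat.choose_le_choose _ (by omega))
      _ ≤ l.choose m * m ^ j := claimA l m hmm j hjm
  have hnatR : ((l - m).choose (m - j) : ℝ) * (l:ℝ) ^ j ≤ (l.choose m : ℝ) * (m:ℝ) ^ j := by
    exact_mod_cast hnat
  -- C(m,j) * j! ≤ m^j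
  have hB2 : (m.choose j : ℝ) * (j.factorial : ℝ) ≤ (m:ℝ) ^ j := by
    have h := Nat.descFactorial_le_pow m j
    rw [Nat.descFactorial_eq_factorial_mul_choose, Nat.mul_comm] at h
    exact_mod_cast h
  -- j^j ≤ exp j * j!
  have hjj : (j:ℝ) ^ j ≤ Real.exp j * (j.factorial : ℝ) := by
    have hfac : (0:ℝ) < (j.factorial : ℝ) := by exact_mod_cast j.factorial_pos
    have h1 : (j:ℝ) ^ j / (j.factorial : ℝ) ≤ Real.exp j := by
      calc (j:ℝ) ^ j / (j.factorial : ℝ)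
          ≤ ∑ i ∈ Finset.range (j+1), (j:ℝ) ^ i / (i.factorial : ℝ) := by
            refine Finset.single_le_sum (f := fun i => (j:ℝ) ^ i / (i.factorial : ℝ))
              (fun i _ => by positivity) (Finset.self_mem_range_succ j)
        _ ≤ Real.exp j := Real.sum_le_exp_of_nonneg hj0.le _
    calc (j:ℝ) ^ j = ((j:ℝ) ^ j / (j.factorial : ℝ)) * (j.factorial : ℝ) := by field_simp
      _ ≤ Real.exp j * (j.factorial : ℝ) := by
          exact mul_le_mul_of_nonneg_right h1 hfac.le
  -- combine: A * B * l^j * j^j ≤ C * m^(2j) * exp j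
  set A := ((l - m).choose (m - j) : ℝ)
  set B := ((m.choose j) : ℝ)
  set C := ((l.choose m) : ℝ)
  have hfac : (0:ℝ) < (j.factorial : ℝ) := by exact_mod_cast j.factorial_pos
  have hcomb : A * B * (l:ℝ) ^ j * (j:ℝ) ^ j ≤ C * (m:ℝ) ^ j * (m:ℝ) ^ j * Real.exp j := by
    calc A * B * (l:ℝ) ^ j * (j:ℝ) ^ j
        ≤ A * B * (l:ℝ) ^ j * (Real.exp j * (j.factorial : ℝ)) := by
          apply mul_le_mul_of_nonneg_left hjj; positivity
      _ = (A * (l:ℝ) ^ j) * (B * (j.factorial : ℝ)) * Real.exp j := by ring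
      _ ≤ (C * (m:ℝ) ^ j) * ((m:ℝ) ^ j) * Real.exp j := by
          apply mul_le_mul_of_nonneg_right _ (Real.exp_pos _).le
          apply mul_le_mul hnatR hB2 (by positivity) (by positivity)
      _ = C * (m:ℝ) ^ j * (m:ℝ) ^ j * Real.exp j := by ring
  -- take logs
  have hlog := Real.log_le_log (by positivity) hcomb
  have hL : Real.log (A * B * (l:ℝ) ^ j * (j:ℝ) ^ j)
      = Real.log A + Real.log B + j * Real.log l + j * Real.log j := by
    rw [Real.log_mul (by positivity) (by positivity),
      Real.log_mul (by positivity) (by positivity),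
      Real.log_mul (by positivity) (by positivity), Real.log_pow, Real.log_pow]
  have hR : Real.log (C * (m:ℝ) ^ j * (m:ℝ) ^ j * Real.exp j)
      = Real.log C + j * Real.log m + j * Real.log m + j := by
    rw [Real.log_mul (by positivity) (Real.exp_ne_zero _),
      Real.log_mul (by positivity) (by positivity),
      Real.log_mul (by positivity) (by positivity), Real.log_pow, Real.log_exp]
  rw [hL, hR] at hlog
  have hlogdiv : Real.log ((j:ℝ) * l / (m:ℝ) ^ 2)
      = Real.log j + Real.log l - 2 * Real.log m := by
    rw [Real.log_div (by positivity) (by positivity), Real.log_mul (by positivity) (by positivity),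
      Real.log_pow]
    ring
  have hlogj : 0 ≤ Real.log j := Real.log_nonneg (by exact_mod_cast hj)
  rw [Real.log_mul (ne_of_gt hA0) (ne_of_gt hB0), hlogdiv]
  linarith [hlog, hlogj]
end

section
/- Let n, m, l be natural numbers with m ≤ l ≤ n and let U be a family of m-element subsets of [n]. Then |Ext(U, l)| · C(n, m) ≥ |U| · C(n, l); that is, the l-extension of U is at least as dense among l-subsets of [n] as U is among m-subsets. -/
/-- The `l`-extension of a family `U` inside the space `[n] = {1, …, n}`:
all `l`-element subsets of `[n]` containing some member of `U`. -/
def extFam (n : ℕ) (U : Finset (Finset ℕ)) (l : ℕ) : Finset (Finset ℕ) :=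
  ((Finset.Icc 1 n).powersetCard l).filter (fun t => ∃ s ∈ U, s ⊆ t)

theorem stmt_6 (n m l : ℕ) (hml : m ≤ l) (hln : l ≤ n)
    (U : Finset (Finset ℕ)) (hU : U ⊆ (Finset.Icc 1 n).powersetCard m) :
    (extFam n U l).card * n.choose m ≥ U.card * n.choose l := by
  have key : U.card * (n - m).choose (l - m) ≤ (extFam n U l).card * l.choose m := by
    refine Finset.card_mul_le_card_mul (· ⊆ ·) (fun s hs => ?_) (fun t ht => ?_)
    · -- each s ∈ U has at least (n-m).choose (l-m) extensions
      have hs' := hU hs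
      rw [Finset.mem_powersetCard] at hs'
      obtain ⟨hsub, hcard⟩ := hs'
      have hc : ((Finset.Icc 1 n) \ s).card = n - m := by
        rw [Finset.card_sdiff_of_subset hsub, Nat.card_Icc, hcard]
        simp
      calc (n - m).choose (l - m)
          = (((Finset.Icc 1 n) \ s).powersetCard (l - m)).card := by
            rw [Finset.card_powersetCard, hc]
        _ ≤ ((extFam n U l).bipartiteAbove (· ⊆ ·) s).card := by
            apply Finset.card_le_card_of_injOn (fun u => s ∪ u)
            · intro u hu
              rw [Finset.mem_coe, Finset.mem_powersetCard] at hu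
              obtain ⟨husub, hucard⟩ := hu
              have hdisj : Disjoint s u := by
                refine Finset.disjoint_left.2 fun x hxs hxu => ?_
                exact (Finset.mem_sdiff.1 (husub hxu)).2 hxs
              rw [Finset.mem_coe, Finset.mem_bipartiteAbove]
              constructor
              · rw [extFam, Finset.mem_filter, Finset.mem_powersetCard]
                refine ⟨⟨Finset.union_subset hsub (husub.trans Finset.sdiff_subset), ?_⟩,
                  s, hs, Finset.subset_union_left⟩
                rw [Finset.card_union_of_disjoint hdisj, hcard, hucard]
                omega
              · exact Finset.subset_union_left
            · intro u hu v hv huv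
              rw [Finset.mem_coe, Finset.mem_powersetCard] at hu hv
              have hu' : Disjoint s u := Finset.disjoint_left.2 fun x hxs hxu =>
                (Finset.mem_sdiff.1 (hu.1 hxu)).2 hxs
              have hv' : Disjoint s v := Finset.disjoint_left.2 fun x hxs hxv =>
                (Finset.mem_sdiff.1 (hv.1 hxv)).2 hxs
              have : (s ∪ u) \ s = (s ∪ v) \ s := by simp only at huv; rw [huv]
              rwa [Finset.union_sdiff_cancel_left hu',
                Finset.union_sdiff_cancel_left hv'] at this
    · -- each t ∈ extFam contains at most l.choose m members of U
      rw [extFam, Finset.mem_filter, Finset.mem_powersetCard] at ht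
      calc ((U.bipartiteBelow (· ⊆ ·) t)).card
          ≤ (t.powersetCard m).card := by
            apply Finset.card_le_card
            intro s hs
            rw [Finset.mem_bipartiteBelow] at hs
            rw [Finset.mem_powersetCard]
            have := hU hs.1
            rw [Finset.mem_powersetCard] at this
            exact ⟨hs.2, this.2⟩
        _ = l.choose m := by rw [Finset.card_powersetCard, ht.1.2]
  have hpos : 0 < l.choose m := Nat.choose_pos hml
  have hid : n.choose l * l.choose m = n.choose m * (n - m).choose (l - m) :=
    Nat.choose_mul hml
  refine ge_iff_le.2 (Nat.le_of_mul_le_mul_right ?_ hpos)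
  calc U.card * n.choose l * l.choose m
      = U.card * (n - m).choose (l - m) * n.choose m := by
        rw [Nat.mul_assoc, hid]; ring
    _ ≤ (extFam n U l).card * l.choose m * n.choose m :=
        Nat.mul_le_mul_right _ key
    _ = (extFam n U l).card * n.choose m * l.choose m := by ring
end

section
/- Let n, m, l be natural numbers with m ≤ l ≤ n, let U be a family of m-element subsets of [n], and let D = {(t, t', d) : t ∈ U, t' ∈ U, d ⊆ [n], |d| = l, t ∪ t' ⊆ d} be the set of double marks. Then |Ext(U, l)| · |D| ≥ ( |U| · C(n−m, l−m) )². -/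
/-- The set of double marks `(t, t', d)` with `t, t' ∈ U`, `d` an `l`-subset
of `[n]` and `t ∪ t' ⊆ d`. -/
def doubleMarks (n : ℕ) (U : Finset (Finset ℕ)) (l : ℕ) :
    Finset (Finset ℕ × Finset ℕ × Finset ℕ) :=
  (U ×ˢ U ×ˢ (Finset.Icc 1 n).powersetCard l).filter
    (fun x => x.1 ∪ x.2.1 ⊆ x.2.2)

open Finset

/-- Counting `l`-supersets of a fixed `m`-set inside `[n]`. -/
lemma count_supersets (n m l : ℕ) (hml : m ≤ l) (hln : l ≤ n) (t : Finset ℕ)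
    (ht : t ⊆ Finset.Icc 1 n) (hc : t.card = m) :
    (((Finset.Icc 1 n).powersetCard l).filter (fun d => t ⊆ d)).card
      = (n - m).choose (l - m) := by
  have hcard : ((Finset.Icc 1 n \ t).powersetCard (l - m)).card = (n - m).choose (l - m) := by
    rw [card_powersetCard, card_sdiff_of_subset ht, Nat.card_Icc, hc]
    simp
  rw [← hcard]
  apply Finset.card_bij' (fun d _ => d \ t) (fun e _ => e ∪ t)
  · intro d hd
    simp only [mem_filter, mem_powersetCard] at hd
    simp only [mem_powersetCard]
    refine ⟨sdiff_subset_sdiff hd.1.1 le_rfl, ?_⟩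
    rw [card_sdiff_of_subset hd.2, hd.1.2, hc]
  · intro e he
    simp only [mem_powersetCard] at he
    simp only [mem_filter, mem_powersetCard]
    have hdisj : Disjoint e t := disjoint_of_subset_left he.1 sdiff_disjoint
    refine ⟨⟨union_subset (he.1.trans sdiff_subset) ht, ?_⟩, subset_union_right⟩
    rw [card_union_of_disjoint hdisj, he.2, hc]
    omega
  · intro d hd
    simp only [mem_filter] at hd
    exact sdiff_union_of_subset hd.2
  · intro e he
    simp only [mem_powersetCard] at he
    exact union_sdiff_cancel_right (disjoint_of_subset_left he.1 sdiff_disjoint)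

theorem stmt_8 (n m l : ℕ) (hml : m ≤ l) (hln : l ≤ n)
    (U : Finset (Finset ℕ)) (hU : U ⊆ (Finset.Icc 1 n).powersetCard m) :
    (extFam n U l).card * (doubleMarks n U l).card ≥
      (U.card * (n - m).choose (l - m)) ^ 2 := by
  classical
  set P := (Finset.Icc 1 n).powersetCard l with hP
  set f : Finset ℕ → ℕ := fun d => (U.filter (fun t => t ⊆ d)).card with hf
  -- f vanishes outside extFam
  have hzero : ∀ d ∈ P, d ∉ extFam n U l → f d = 0 := by
    intro d hd hnd
    simp only [extFam, mem_filter, not_and, hd, true_implies, not_exists, not_and] at hnd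
    simp only [hf, card_eq_zero, filter_eq_empty_iff]
    exact fun t ht hsub => hnd hd t ht hsub
  have hsub : extFam n U l ⊆ P := filter_subset _ _
  -- sum of f over P equals |U| * C(n-m, l-m)
  have hsum : ∑ d ∈ P, f d = U.card * (n - m).choose (l - m) := by
    simp only [hf, card_filter]
    rw [Finset.sum_comm]
    have key : ∀ t ∈ U, (∑ d ∈ P, if t ⊆ d then 1 else 0) = (n - m).choose (l - m) := by
      intro t ht
      have htm := mem_powersetCard.1 (hU ht)
      rw [← Finset.card_filter, count_supersets n m l hml hln t htm.1 htm.2]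
    rw [Finset.sum_congr rfl key, Finset.sum_const, smul_eq_mul]
  -- double marks count equals sum of f^2 over P
  have hdm : (doubleMarks n U l).card = ∑ d ∈ P, f d ^ 2 := by
    rw [doubleMarks, card_filter]
    rw [Finset.sum_product]
    simp only [Finset.sum_product]
    refine Eq.trans (Finset.sum_congr rfl fun x _ => Finset.sum_comm) ?_
    rw [Finset.sum_comm]
    refine Finset.sum_congr rfl fun d hd => ?_
    have : ∀ t t' : Finset ℕ, (t ∪ t' ⊆ d) ↔ (t ⊆ d ∧ t' ⊆ d) := fun t t' => union_subset_iff
    simp only [this, ite_and]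
    rw [sq]
    simp only [hf, card_filter]
    rw [Finset.sum_mul]
    refine Finset.sum_congr rfl fun t ht => ?_
    by_cases h : t ⊆ d <;> simp [h]
  -- restrict sums to extFam
  have hsumE : ∑ d ∈ extFam n U l, f d = ∑ d ∈ P, f d :=
    Finset.sum_subset hsub hzero
  have hsqE : ∑ d ∈ extFam n U l, f d ^ 2 = ∑ d ∈ P, f d ^ 2 :=
    Finset.sum_subset hsub (fun d hd hnd => by rw [hzero d hd hnd]; ring)
  -- Cauchy-Schwarz over extFam, in ℤ
  have CS : ((∑ d ∈ extFam n U l, f d : ℕ) : ℤ) ^ 2 ≤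
      ((extFam n U l).card : ℤ) * ((∑ d ∈ extFam n U l, f d ^ 2 : ℕ) : ℤ) := by
    push_cast
    exact sq_sum_le_card_mul_sum_sq
  rw [ge_iff_le, ← hsum, ← hsumE, hdm, ← hsqE]
  exact_mod_cast CS
end

section
/- Let n, m be natural numbers with m ≤ n, let U be a family of m-element subsets of [n], and let X be a finite set disjoint from [n]. Let V = {b ⊆ [n] ∪ X : |b| = m + |X| and there exists s ∈ U with s ⊆ b} be the space-augmenting extension of U from [n] into [n] ∪ X. Then |V| = Σ_{j=0}^{|X|} |Ext(U, m+j)| · C(|X|, |X| − j), where Ext(U, m+j) is taken inside the space [n]. -/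
theorem stmt_11 (n m : ℕ) (hmn : m ≤ n)
    (U : Finset (Finset ℕ)) (hU : U ⊆ (Finset.Icc 1 n).powersetCard m)
    (X : Finset ℕ) (hX : Disjoint X (Finset.Icc 1 n)) :
    (((Finset.Icc 1 n ∪ X).powersetCard (m + X.card)).filter
        (fun b => ∃ s ∈ U, s ⊆ b)).card =
      ∑ j ∈ Finset.range (X.card + 1),
        (extFam n U (m + j)).card * X.card.choose (X.card - j) := by
  classical
  set I := Finset.Icc 1 n with hI
  have hRHS : ∑ j ∈ Finset.range (X.card + 1),
        (extFam n U (m + j)).card * X.card.choose (X.card - j)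
      = ((Finset.range (X.card + 1)).sigma
          (fun j => (extFam n U (m + j)) ×ˢ (X.powersetCard (X.card - j)))).card := by
    rw [Finset.card_sigma]
    refine Finset.sum_congr rfl fun j _ => ?_
    rw [Finset.card_product, Finset.card_powersetCard]
  rw [hRHS]
  -- key facts about members of the LHS
  have key : ∀ b ∈ ((I ∪ X).powersetCard (m + X.card)).filter
      (fun b => ∃ s ∈ U, s ⊆ b),
      (b ∩ I).card - m ≤ X.card ∧ m ≤ (b ∩ I).card ∧
      (b ∩ I).card + (b ∩ X).card = m + X.card ∧ (∃ s ∈ U, s ⊆ b ∩ I) := by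
    intro b hb
    simp only [Finset.mem_filter, Finset.mem_powersetCard] at hb
    obtain ⟨⟨hbsub, hbcard⟩, s, hsU, hsb⟩ := hb
    have hsI : s ⊆ I ∧ s.card = m := by
      have := hU hsU
      rw [Finset.mem_powersetCard] at this
      exact this
    have hsbI : s ⊆ b ∩ I := Finset.subset_inter hsb hsI.1
    have hm : m ≤ (b ∩ I).card := hsI.2 ▸ Finset.card_le_card hsbI
    have hdisj : Disjoint (b ∩ I) (b ∩ X) :=
      Disjoint.mono (Finset.inter_subset_right) (Finset.inter_subset_right) hX.symm
    have hunion : (b ∩ I) ∪ (b ∩ X) = b := by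
      rw [← Finset.inter_union_distrib_left]
      exact Finset.inter_eq_left.mpr hbsub
    have hcard : (b ∩ I).card + (b ∩ X).card = m + X.card := by
      rw [← Finset.card_union_of_disjoint hdisj, hunion, hbcard]
    have hXle : (b ∩ X).card ≤ X.card := Finset.card_le_card Finset.inter_subset_right
    refine ⟨?_, hm, hcard, s, hsU, hsbI⟩
    omega
  refine Finset.card_bij
    (fun b _ => ⟨(b ∩ I).card - m, (b ∩ I, b ∩ X)⟩) ?_ ?_ ?_
  · intro b hb
    obtain ⟨hjle, hm, hcard, s, hsU, hsbI⟩ := key b hb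
    simp only [Finset.mem_sigma, Finset.mem_range, Finset.mem_product,
      Finset.mem_powersetCard, extFam, Finset.mem_filter]
    refine ⟨by omega, ⟨⟨Finset.inter_subset_right, by omega⟩, s, hsU, hsbI⟩,
      Finset.inter_subset_right, by omega⟩
  · intro b1 hb1 b2 hb2 heq
    have h2 : (b1 ∩ I, b1 ∩ X) = (b2 ∩ I, b2 ∩ X) := congrArg Sigma.snd heq
    rw [Prod.mk.injEq] at h2
    obtain ⟨hII, hXX⟩ := h2
    have h1 := key b1 hb1
    simp only [Finset.mem_filter, Finset.mem_powersetCard] at hb1 hb2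
    have e1 : (b1 ∩ I) ∪ (b1 ∩ X) = b1 := by
      rw [← Finset.inter_union_distrib_left]
      exact Finset.inter_eq_left.mpr hb1.1.1
    have e2 : (b2 ∩ I) ∪ (b2 ∩ X) = b2 := by
      rw [← Finset.inter_union_distrib_left]
      exact Finset.inter_eq_left.mpr hb2.1.1
    rw [← e1, ← e2, hII, hXX]
  · rintro ⟨j, t, u⟩ hj
    simp only [Finset.mem_sigma, Finset.mem_range, Finset.mem_product,
      Finset.mem_powersetCard, extFam, Finset.mem_filter] at hj
    obtain ⟨hjlt, ⟨⟨htI, htc⟩, s, hsU, hst⟩, huX, huc⟩ := hj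
    have hdXt : Disjoint t X := (hX.mono_right htI).symm
    have hdut : Disjoint u I := hX.mono_left huX
    have htu : Disjoint t u := (hdXt.mono_right huX).symm.symm
    have htI2 : (t ∪ u) ∩ I = t := by
      rw [Finset.union_inter_distrib_right, Finset.inter_eq_left.mpr htI,
        Finset.disjoint_iff_inter_eq_empty.mp hdut, Finset.union_empty]
    have huX2 : (t ∪ u) ∩ X = u := by
      rw [Finset.union_inter_distrib_right, Finset.inter_eq_left.mpr huX,
        Finset.disjoint_iff_inter_eq_empty.mp hdXt, Finset.empty_union]
    refine ⟨t ∪ u, ?_, ?_⟩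
    · simp only [Finset.mem_filter, Finset.mem_powersetCard]
      refine ⟨⟨Finset.union_subset_union htI huX, ?_⟩, s, hsU, hst.trans Finset.subset_union_left⟩
      rw [Finset.card_union_of_disjoint htu, htc, huc]
      omega
    · have hjj : ((t ∪ u) ∩ I).card - m = j := by rw [htI2, htc]; omega
      simp only [htI2, huX2, hjj]
      congr 1
      omega
end

section
/- Let n, l₀ be natural numbers with l₀ ≥ 1, let A be any family of l₀-element subsets of [n], and let b ⊆ [n] be a set with l₀ ≤ n − |b|. Then |{ s ⊆ [n] \ b : |s| = l₀ and there exists t ∈ A with t ⊆ b ∪ s }| · C(n, l₀) ≥ C(n − |b|, l₀) · |A|. -/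
private lemma arith12 (a a' c c' p q r v w : ℕ) (hw : 1 ≤ w) (hv : 1 ≤ v)
    (hid : w * p = v * q) (h1 : r * c' ≤ a' * q) (h2 : w * c ≤ c' * v) (h3 : a' ≤ a) :
    r * c ≤ a * p := by
  have key : (r * c) * (v * w) ≤ (a * p) * (v * w) := by
    calc (r * c) * (v * w) = (r * (w * c)) * v := by ring
      _ ≤ (r * (c' * v)) * v := Nat.mul_le_mul_right _ (Nat.mul_le_mul_left _ h2)
      _ = (r * c') * (v * v) := by ring
      _ ≤ (a' * q) * (v * v) := Nat.mul_le_mul_right _ h1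
      _ ≤ (a * q) * (v * v) := Nat.mul_le_mul_right _ (Nat.mul_le_mul_right _ h3)
      _ = a * (v * q) * v := by ring
      _ = a * (w * p) * v := by rw [hid]
      _ = (a * p) * (v * w) := by ring
  exact Nat.le_of_mul_le_mul_right key (by positivity)

private lemma step12 (V : Finset ℕ) (l : ℕ) (hl : 1 ≤ l) (hlv : l ≤ V.card)
    (A : Finset (Finset ℕ)) (hA : A ⊆ V.powersetCard l) (x : ℕ) :
    (V.card - l) * A.card ≤
      (((V.erase x).powersetCard l).filter (fun s => ∃ t ∈ A, t ⊆ insert x s)).card * V.card := by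
  classical
  set A' := ((V.erase x).powersetCard l).filter (fun s => ∃ t ∈ A, t ⊆ insert x s) with hA'def
  have hmem : ∀ t ∈ A, t ⊆ V ∧ t.card = l := by
    intro t ht
    simpa [Finset.mem_powersetCard] using hA ht
  set A0 := A.filter (fun t => x ∉ t) with hA0
  set Ax := A.filter (fun t => x ∈ t) with hAxdef
  have hsplit : Ax.card + A0.card = A.card :=
    Finset.card_filter_add_card_filter_not (fun t => x ∈ t)
  -- A0 sits inside A'
  have h0 : A0 ⊆ A' := by
    intro t ht
    rw [hA0, Finset.mem_filter] at ht
    obtain ⟨htA, htx⟩ := ht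
    obtain ⟨htV, htc⟩ := hmem t htA
    refine Finset.mem_filter.mpr ⟨?_, t, htA, Finset.subset_insert _ _⟩
    exact Finset.mem_powersetCard.mpr ⟨Finset.subset_erase.mpr ⟨htV, htx⟩, htc⟩
  -- double counting for Ax
  set P := Ax.sigma (fun t => V \ t) with hPdef
  have hPcard : P.card = Ax.card * (V.card - l) := by
    rw [hPdef, Finset.card_sigma]
    rw [Finset.sum_congr rfl (fun t ht => ?_), Finset.sum_const, smul_eq_mul]
    have ht' : t ∈ A := Finset.mem_of_mem_filter t ht
    rw [Finset.card_sdiff_of_subset (hmem t ht').1, (hmem t ht').2]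
  set f : (Σ _ : Finset ℕ, ℕ) → Finset ℕ := fun p => insert p.2 (p.1.erase x) with hfdef
  have hPfacts : ∀ p ∈ P, p.1 ∈ A ∧ x ∈ p.1 ∧ p.2 ∈ V ∧ p.2 ∉ p.1 := by
    intro p hp
    rw [hPdef, Finset.mem_sigma] at hp
    obtain ⟨h1, h2⟩ := hp
    rw [hAxdef, Finset.mem_filter] at h1
    rw [Finset.mem_sdiff] at h2
    exact ⟨h1.1, h1.2, h2.1, h2.2⟩
  have hrecover : ∀ p ∈ P, p.2 ∈ f p ∧ (f p).erase p.2 = p.1.erase x ∧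
      p.1 = insert x ((f p).erase p.2) ∧ (f p).card = l := by
    intro p hp
    obtain ⟨hpA, hpx, hpV, hpnt⟩ := hPfacts p hp
    have hy : p.2 ∉ p.1.erase x := fun h => hpnt (Finset.mem_of_mem_erase h)
    have he : (f p).erase p.2 = p.1.erase x := by
      rw [hfdef]; exact Finset.erase_insert hy
    refine ⟨Finset.mem_insert_self _ _, he, ?_, ?_⟩
    · rw [he, Finset.insert_erase hpx]
    · rw [hfdef]
      simp only []
      rw [Finset.card_insert_of_notMem hy, Finset.card_erase_of_mem hpx, (hmem _ hpA).2]
      omega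
  have himg : P.image f ⊆ A' := by
    intro s hs
    obtain ⟨p, hp, rfl⟩ := Finset.mem_image.mp hs
    obtain ⟨hpA, hpx, hpV, hpnt⟩ := hPfacts p hp
    obtain ⟨hy, he, hrec, hc⟩ := hrecover p hp
    refine Finset.mem_filter.mpr ⟨Finset.mem_powersetCard.mpr ⟨?_, hc⟩, p.1, hpA, ?_⟩
    · rw [hfdef]
      intro z hz
      simp only [Finset.mem_insert] at hz
      rcases hz with rfl | hz
      · refine Finset.mem_erase.mpr ⟨?_, hpV⟩
        intro h; exact hpnt (h ▸ hpx)
      · exact Finset.mem_erase.mpr ⟨(Finset.mem_erase.mp hz).1,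
          (hmem _ hpA).1 (Finset.mem_of_mem_erase hz)⟩
    · -- p.1 ⊆ insert x (f p)
      rw [hrec]
      intro z hz
      rcases Finset.mem_insert.mp hz with rfl | hz
      · exact Finset.mem_insert_self _ _
      · exact Finset.mem_insert_of_mem (Finset.mem_of_mem_erase hz)
  have hfiber : ∀ s ∈ P.image f, (P.filter (fun p => f p = s)).card ≤ l := by
    intro s hs
    have hscard : s.card = l := by
      have := himg hs
      rw [hA'def, Finset.mem_filter, Finset.mem_powersetCard] at this
      exact this.1.2
    rw [← hscard]
    refine Finset.card_le_card_of_injOn (fun p => p.2) ?_ ?_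
    · intro p hp
      rw [Finset.mem_coe, Finset.mem_filter] at hp
      have := (hrecover p hp.1).1
      rw [hp.2] at this; exact this
    · intro p hp q hq hpq
      simp only [Finset.coe_filter, Set.mem_setOf_eq] at hp hq
      obtain ⟨hpP, hps⟩ := hp
      obtain ⟨hqP, hqs⟩ := hq
      obtain ⟨_, _, hp1, _⟩ := hrecover p hpP
      obtain ⟨_, _, hq1, _⟩ := hrecover q hqP
      have hpq' : p.2 = q.2 := hpq
      have h1 : p.1 = q.1 := by rw [hp1, hq1, hps, hqs, hpq']
      exact Sigma.ext h1 (heq_of_eq hpq')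
  have hPle : P.card ≤ l * (P.image f).card := Finset.card_le_mul_card_image P l hfiber
  have himgle : (P.image f).card ≤ A'.card := Finset.card_le_card himg
  -- combine
  have e2 : Ax.card * (V.card - l) ≤ l * A'.card := by
    rw [← hPcard]
    exact le_trans hPle (Nat.mul_le_mul_left _ himgle)
  have e1 : (V.card - l) * A0.card ≤ (V.card - l) * A'.card :=
    Nat.mul_le_mul_left _ (Finset.card_le_card h0)
  calc (V.card - l) * A.card = (V.card - l) * Ax.card + (V.card - l) * A0.card := by
        rw [← hsplit, Nat.mul_add]
    _ ≤ l * A'.card + (V.card - l) * A'.card := by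
        refine Nat.add_le_add ?_ e1
        rw [Nat.mul_comm (V.card - l) Ax.card]; exact e2
    _ = (l + (V.card - l)) * A'.card := by rw [Nat.add_mul]
    _ = V.card * A'.card := by rw [Nat.add_sub_cancel' hlv]
    _ = A'.card * V.card := Nat.mul_comm _ _

private lemma main12 (l : ℕ) (hl : 1 ≤ l) (b : Finset ℕ) :
    ∀ (V : Finset ℕ) (A : Finset (Finset ℕ)), A ⊆ V.powersetCard l → b ⊆ V →
      l ≤ V.card - b.card →
      (V.card - b.card).choose l * A.card ≤
        (((V \ b).powersetCard l).filter (fun s => ∃ t ∈ A, t ⊆ b ∪ s)).card *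
          (V.card).choose l := by
  classical
  induction b using Finset.induction_on with
  | empty =>
      intro V A hA hb hcard
      simp only [Finset.card_empty, Nat.sub_zero, Finset.sdiff_empty, Finset.empty_union]
      have hsub : A ⊆ (V.powersetCard l).filter (fun s => ∃ t ∈ A, t ⊆ s) := by
        intro t ht
        exact Finset.mem_filter.mpr ⟨hA ht, t, ht, Finset.Subset.refl t⟩
    
      calc V.card.choose l * A.card
          ≤ V.card.choose l * ((V.powersetCard l).filter (fun s => ∃ t ∈ A, t ⊆ s)).card :=
            Nat.mul_le_mul_left _ (Finset.card_le_card hsub)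
        _ = _ := Nat.mul_comm _ _
  | @insert x b' hx ih =>
      intro V A hA hb hcard
      have hxV : x ∈ V := hb (Finset.mem_insert_self x b')
      have hbV' : b' ⊆ V.erase x := by
        rw [Finset.subset_erase]
        exact ⟨fun z hz => hb (Finset.mem_insert_of_mem hz), hx⟩
      have hVcard : (V.erase x).card = V.card - 1 := Finset.card_erase_of_mem hxV
      have hbcard : (insert x b').card = b'.card + 1 := Finset.card_insert_of_notMem hx
      have hV1 : 1 ≤ V.card := Finset.card_pos.mpr ⟨x, hxV⟩
      rw [hbcard] at hcard
      have hlv : l ≤ V.card := by omega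
      set A' := ((V.erase x).powersetCard l).filter (fun s => ∃ t ∈ A, t ⊆ insert x s)
        with hA'def
      have hstep : (V.card - l) * A.card ≤ A'.card * V.card :=
        step12 V l hl hlv A hA x
      have hA'sub : A' ⊆ (V.erase x).powersetCard l := Finset.filter_subset _ _
      have hcard' : l ≤ (V.erase x).card - b'.card := by rw [hVcard]; omega
      have hih := ih (V.erase x) A' hA'sub hbV' hcard'
      -- the two filtered sets
      have hsd : V.erase x \ b' = V \ insert x b' := by
        ext z
        simp only [Finset.mem_sdiff, Finset.mem_erase, Finset.mem_insert]
        tauto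
      have hFsub : ((V.erase x \ b').powersetCard l).filter (fun s => ∃ t ∈ A', t ⊆ b' ∪ s) ⊆
          ((V \ insert x b').powersetCard l).filter
            (fun s => ∃ t ∈ A, t ⊆ insert x b' ∪ s) := by
        intro s hs
        rw [Finset.mem_filter] at hs
        obtain ⟨hs1, t', ht'A', ht's⟩ := hs
        rw [hA'def, Finset.mem_filter] at ht'A'
        obtain ⟨_, t, htA, htt'⟩ := ht'A'
        refine Finset.mem_filter.mpr ⟨by rwa [hsd] at hs1, t, htA, ?_⟩
        calc t ⊆ insert x t' := htt'
          _ ⊆ insert x (b' ∪ s) := Finset.insert_subset_insert _ ht's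
          _ = insert x b' ∪ s := (Finset.insert_union _ _ _).symm
      have hF : (((V.erase x \ b').powersetCard l).filter (fun s => ∃ t ∈ A', t ⊆ b' ∪ s)).card ≤
          (((V \ insert x b').powersetCard l).filter
            (fun s => ∃ t ∈ A, t ⊆ insert x b' ∪ s)).card :=
        Finset.card_le_card hFsub
      -- binomial identity
      have hid : (V.card - l) * V.card.choose l = V.card * (V.card - 1).choose l := by
        have := Nat.choose_mul_succ_eq (V.card - 1) l
        have hv : V.card - 1 + 1 = V.card := by omega
        rw [hv] at this
        rw [Nat.mul_comm, ← this, Nat.mul_comm]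
      rw [hVcard] at hih
      rw [hbcard]
      have hmn : V.card - (b'.card + 1) = V.card - 1 - b'.card := by omega
      rw [hmn]
      exact arith12 _ _ _ _ _ _ _ V.card (V.card - l) (by omega) hV1 hid
        (le_trans hih (Nat.mul_le_mul_right _ hF)) hstep (le_refl _)

theorem stmt_12 (n l₀ : ℕ) (hl₀ : 1 ≤ l₀)
    (A : Finset (Finset ℕ)) (hA : A ⊆ (Finset.Icc 1 n).powersetCard l₀)
    (b : Finset ℕ) (hb : b ⊆ Finset.Icc 1 n) (hcard : l₀ ≤ n - b.card) :
    (((Finset.Icc 1 n \ b).powersetCard l₀).filter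
        (fun s => ∃ t ∈ A, t ⊆ b ∪ s)).card * n.choose l₀ ≥
      (n - b.card).choose l₀ * A.card := by
  have hc : (Finset.Icc 1 n).card = n := by
    rw [Nat.card_Icc]; omega
  have := main12 l₀ hl₀ b (Finset.Icc 1 n) A hA hb (by rw [hc]; exact hcard)
  rwa [hc] at this
end

section
/- There exist constants c ∈ (0,1), ρ > 0 and a natural number n₀ such that the following holds: for every n ≥ n₀, every m ≥ 1 with m² ≤ c·n, every l₀ with m² < l₀ ≤ n, and every nonempty family U of m-element subsets of [n], there exists a set g ⊆ [n] with |g| ≤ κ(U) / ln(l₀/m²) such that |Ext(U_g, l₀)| ≥ C(n − |g|, l₀ − |g|) · (1 − e^{−ρ}). -/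
open Finset

/-- The sparsity `κ(U) = ln C(n,m) − ln |U|` of a family of `m`-subsets of `[n]`. -/
noncomputable def sparsity (n m : ℕ) (U : Finset (Finset ℕ)) : ℝ :=
  Real.log (n.choose m) - Real.log U.card

lemma card_filter_superset (X s : Finset ℕ) (l : ℕ) (hs : s ⊆ X) (hl : s.card ≤ l) :
    ((X.powersetCard l).filter (fun T => s ⊆ T)).card
      = (X.card - s.card).choose (l - s.card) := by
  rw [show X.card - s.card = (X \ s).card from (Finset.card_sdiff_of_subset hs).symm,
    ← Finset.card_powersetCard (l - s.card) (X \ s)]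
  apply Finset.card_bij (fun T _ => T \ s)
  · intro T hT
    simp only [Finset.mem_filter, Finset.mem_powersetCard] at hT ⊢
    obtain ⟨⟨hTX, hTc⟩, hsT⟩ := hT
    exact ⟨Finset.sdiff_subset_sdiff hTX (le_refl s),
      by rw [Finset.card_sdiff_of_subset hsT, hTc]⟩
  · intro T₁ h₁ T₂ h₂ he
    simp only [Finset.mem_filter, Finset.mem_powersetCard] at h₁ h₂
    rw [← Finset.sdiff_union_of_subset h₁.2, ← Finset.sdiff_union_of_subset h₂.2, he]
  · intro T' hT'
    simp only [Finset.mem_powersetCard] at hT'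
    obtain ⟨hT'sub, hT'card⟩ := hT'
    have hdisj : Disjoint T' s := (Finset.subset_sdiff.mp hT'sub).2
    refine ⟨T' ∪ s, ?_, ?_⟩
    · simp only [Finset.mem_filter, Finset.mem_powersetCard]
      refine ⟨⟨Finset.union_subset (hT'sub.trans (Finset.sdiff_subset)) hs, ?_⟩,
        Finset.subset_union_right⟩
      rw [Finset.card_union_of_disjoint hdisj, hT'card]
      omega
    · rw [Finset.union_sdiff_right, Finset.sdiff_eq_self_of_disjoint hdisj]

lemma chain_up (u v : ℕ) (q : ℝ) (hq : 0 ≤ q) :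
    ∀ i, (∀ t, t < i → ((v + t + 1 : ℕ) : ℝ) ≤ q * ((u + t + 1 : ℕ) : ℝ)) →
      ((u.choose v : ℕ) : ℝ) ≤ (((u + i).choose (v + i) : ℕ) : ℝ) * q ^ i := by
  intro i
  induction i with
  | zero => simp
  | succ i ih =>
    intro hstep
    have h1 := ih (fun t ht => hstep t (by omega))
    have key : (((u + i).choose (v + i) : ℕ) : ℝ)
        ≤ (((u + (i+1)).choose (v + (i+1)) : ℕ) : ℝ) * q := by
      have hid : (u + i + 1) * ((u + i).choose (v + i))
          = ((u + i + 1).choose (v + i + 1)) * (v + i + 1) :=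
        Nat.add_one_mul_choose_eq (u + i) (v + i)
      have hidR : ((u + i + 1 : ℕ) : ℝ) * (((u + i).choose (v + i) : ℕ) : ℝ)
          = (((u + i + 1).choose (v + i + 1) : ℕ) : ℝ) * ((v + i + 1 : ℕ) : ℝ) := by
        exact_mod_cast congrArg (fun x : ℕ => (x : ℝ)) hid
      have hstep' := hstep i (by omega)
      have hpos : (0 : ℝ) < ((u + i + 1 : ℕ) : ℝ) := by positivity
      have hC : (0 : ℝ) ≤ (((u + i + 1).choose (v + i + 1) : ℕ) : ℝ) := by positivity
      have e1 : u + (i+1) = u + i + 1 := by omega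
      have e2 : v + (i+1) = v + i + 1 := by omega
      rw [e1, e2]
      have h2 : ((u + i + 1 : ℕ) : ℝ) * (((u + i).choose (v + i) : ℕ) : ℝ)
          ≤ (((u + i + 1).choose (v + i + 1) : ℕ) : ℝ) * (q * ((u + i + 1 : ℕ) : ℝ)) := by
        rw [hidR]
        exact mul_le_mul_of_nonneg_left hstep' hC
      nlinarith
    calc ((u.choose v : ℕ) : ℝ) ≤ (((u + i).choose (v + i) : ℕ) : ℝ) * q ^ i := h1
      _ ≤ ((((u + (i+1)).choose (v + (i+1)) : ℕ) : ℝ) * q) * q ^ i :=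
          mul_le_mul_of_nonneg_right key (by positivity)
      _ = (((u + (i+1)).choose (v + (i+1)) : ℕ) : ℝ) * q ^ (i+1) := by ring

lemma chain_down (u v : ℕ) (w : ℝ) (hw : 0 ≤ w) :
    ∀ i, (∀ t, t < i → ((u + t + 1 : ℕ) : ℝ) ≤ w * ((v + t + 1 : ℕ) : ℝ)) →
      (((u + i).choose (v + i) : ℕ) : ℝ) ≤ ((u.choose v : ℕ) : ℝ) * w ^ i := by
  intro i
  induction i with
  | zero => simp
  | succ i ih =>
    intro hstep
    have h1 := ih (fun t ht => hstep t (by omega))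
    have key : (((u + (i+1)).choose (v + (i+1)) : ℕ) : ℝ)
        ≤ (((u + i).choose (v + i) : ℕ) : ℝ) * w := by
      have hid : (u + i + 1) * ((u + i).choose (v + i))
          = ((u + i + 1).choose (v + i + 1)) * (v + i + 1) :=
        Nat.add_one_mul_choose_eq (u + i) (v + i)
      have hidR : ((u + i + 1 : ℕ) : ℝ) * (((u + i).choose (v + i) : ℕ) : ℝ)
          = (((u + i + 1).choose (v + i + 1) : ℕ) : ℝ) * ((v + i + 1 : ℕ) : ℝ) := by
        exact_mod_cast congrArg (fun x : ℕ => (x : ℝ)) hid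
      have hstep' := hstep i (by omega)
      have hpos : (0 : ℝ) < ((v + i + 1 : ℕ) : ℝ) := by positivity
      have hC2 : (0 : ℝ) ≤ (((u + i).choose (v + i) : ℕ) : ℝ) := by positivity
      have e1 : u + (i+1) = u + i + 1 := by omega
      have e2 : v + (i+1) = v + i + 1 := by omega
      rw [e1, e2]
      have h3 : (((u + i + 1).choose (v + i + 1) : ℕ) : ℝ) * ((v + i + 1 : ℕ) : ℝ)
          ≤ ((((u + i).choose (v + i) : ℕ) : ℝ) * w) * ((v + i + 1 : ℕ) : ℝ) := by
        rw [← hidR]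
        calc ((u + i + 1 : ℕ) : ℝ) * (((u + i).choose (v + i) : ℕ) : ℝ)
            ≤ (w * ((v + i + 1 : ℕ) : ℝ)) * (((u + i).choose (v + i) : ℕ) : ℝ) :=
              mul_le_mul_of_nonneg_right hstep' hC2
          _ = ((((u + i).choose (v + i) : ℕ) : ℝ) * w) * ((v + i + 1 : ℕ) : ℝ) := by ring
      exact le_of_mul_le_mul_right h3 hpos
    calc (((u + (i+1)).choose (v + (i+1)) : ℕ) : ℝ)
        ≤ (((u + i).choose (v + i) : ℕ) : ℝ) * w := key
      _ ≤ (((u.choose v : ℕ) : ℝ) * w ^ i) * w := mul_le_mul_of_nonneg_right h1 hw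
      _ = ((u.choose v : ℕ) : ℝ) * w ^ (i+1) := by ring

lemma falling_bound (n m : ℕ) (h2m : 2 * m ≤ n) :
    ∀ k, k ≤ m → (n - k).choose (m - k) * (n - m) ^ k ≤ n.choose m * m ^ k := by
  intro k
  induction k with
  | zero => simp
  | succ k ih =>
    intro hk
    have hk' : k ≤ m := by omega
    have key : (n - (k+1)).choose (m - (k+1)) * (n - m) ≤ (n - k).choose (m - k) * m := by
      have e1 : n - k - 1 + 1 = n - k := by omega
      have e2 : m - k - 1 + 1 = m - k := by omega
      have hid : (n - k) * ((n - k - 1).choose (m - k - 1))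
          = ((n - k).choose (m - k)) * (m - k) := by
        have := Nat.add_one_mul_choose_eq (n - k - 1) (m - k - 1)
        simpa [Nat.succ_eq_add_one, e1, e2] using this
      have e3 : n - (k+1) = n - k - 1 := by omega
      have e4 : m - (k+1) = m - k - 1 := by omega
      have h3 : ((n - (k+1)).choose (m - (k+1)) * (n - m)) * (n - k)
          ≤ ((n - k).choose (m - k) * m) * (n - k) := by
        rw [e3, e4]
        calc ((n - k - 1).choose (m - k - 1) * (n - m)) * (n - k)
            = ((n - k) * ((n - k - 1).choose (m - k - 1))) * (n - m) := by ring
          _ = ((n - k).choose (m - k) * (m - k)) * (n - m) := by rw [hid]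
          _ = (n - k).choose (m - k) * ((m - k) * (n - m)) := by ring
          _ ≤ (n - k).choose (m - k) * (m * (n - k)) := by
              apply Nat.mul_le_mul_left
              exact Nat.mul_le_mul (Nat.sub_le m k) (Nat.sub_le_sub_left hk' n)
          _ = ((n - k).choose (m - k) * m) * (n - k) := by ring
      exact Nat.le_of_mul_le_mul_right h3 (by omega)
    calc (n - (k+1)).choose (m - (k+1)) * (n - m) ^ (k+1)
        = ((n - (k+1)).choose (m - (k+1)) * (n - m)) * (n - m) ^ k := by ring
      _ ≤ ((n - k).choose (m - k) * m) * (n - m) ^ k := Nat.mul_le_mul_right _ key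
      _ = ((n - k).choose (m - k) * (n - m) ^ k) * m := by ring
      _ ≤ (n.choose m * m ^ k) * m := Nat.mul_le_mul_right _ (ih hk')
      _ = n.choose m * m ^ (k+1) := by ring

lemma key_xy (mR kR nR lR : ℝ) (h1 : 1 ≤ mR) (hk0 : 0 ≤ kR) (hk1 : kR + 1 ≤ mR)
    (hl : mR^2 + 1 ≤ lR) (hln : lR ≤ nR) (h100 : 100*mR^2 ≤ nR) (hn : 100 ≤ nR)
    (h10 : 10*mR ≤ nR) (h50 : 50*mR ≤ nR) :
    ((nR - kR) * lR) / ((lR - mR + 1) * (mR*(nR - mR)))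
      + ((nR - kR) * (lR - kR)) / ((lR - mR + 1) * (nR + kR - 2*mR + 1))
      ≤ 1 + 4/(mR - kR) := by
  have hm2 : mR ≤ mR^2 := by nlinarith
  have hD1 : (0:ℝ) < lR - mR + 1 := by linarith
  have hD2 : (0:ℝ) < nR + kR - 2*mR + 1 := by linarith
  have hnm0 : (0:ℝ) < nR - mR := by linarith
  have hmnm : (0:ℝ) < mR*(nR - mR) := mul_pos (by linarith) hnm0
  have hμ0 : (0:ℝ) < mR - kR := by linarith
  have hlpos : (0:ℝ) < lR := by linarith
  have hnpos : (0:ℝ) < nR := by linarith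
  have f3 : 9*nR ≤ 10*(nR - mR) := by linarith
  have f4 : 3*lR ≤ 5*(lR - mR + 1) := by linarith [sq_nonneg (mR - 2)]
  have f6 : 24*nR ≤ 25*(nR + kR - 2*mR + 1) := by linarith
  have f7 : mR^2 - mR + 2 ≤ lR - mR + 1 := by linarith
  have hsq : (mR - kR)^2 ≤ mR^2 := by
    have h := mul_nonneg hk0 (by linarith : (0:ℝ) ≤ 2*mR - kR)
    nlinarith [h]
  have hx : (mR - kR) * (((nR - kR) * lR) / ((lR - mR + 1) * (mR*(nR - mR)))) ≤ 2 := by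
    rw [mul_div_assoc', div_le_iff₀ (mul_pos hD1 hmnm)]
    have h5 : (3*lR)*(9*nR) ≤ (5*(lR - mR + 1))*(10*(nR - mR)) :=
      mul_le_mul f4 f3 (by linarith) (by linarith)
    have h6 : nR*lR ≤ 2*((lR - mR + 1)*(nR - mR)) := by
      linarith [h5, (mul_pos hnpos hlpos).le]
    have h8 : (mR - kR)*((nR - kR)*lR) ≤ mR*(nR*lR) := by
      apply mul_le_mul (by linarith) _ _ (by linarith)
      · exact mul_le_mul_of_nonneg_right (by linarith) (le_of_lt hlpos)
      · exact mul_nonneg (by linarith) (le_of_lt hlpos)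
    have h9 : mR*(nR*lR) ≤ 2*((lR - mR + 1)*(mR*(nR - mR))) := by
      linarith [mul_le_mul_of_nonneg_left h6 (show (0:ℝ) ≤ mR by linarith)]
    linarith
  have hy : (mR - kR) * (((nR - kR) * (lR - kR)) / ((lR - mR + 1)*(nR + kR - 2*mR + 1)))
      ≤ (mR - kR) + 2 := by
    rw [mul_div_assoc', div_le_iff₀ (mul_pos hD1 hD2)]
    have hμ1 : (1:ℝ) ≤ mR - kR := by linarith
    have ha0 : (0:ℝ) ≤ nR - kR := by linarith
    have hb0 : (0:ℝ) ≤ lR - kR := by linarith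
    have hid : (nR - kR)*(lR - kR) - (lR - mR + 1)*(nR + kR - 2*mR + 1)
        ≤ 2*(mR - kR)*(lR - kR) + (mR - kR)*(nR - kR) := by
      linarith [mul_nonneg (by linarith : (0:ℝ) ≤ 2*(mR - kR) - 1)
        (by linarith : (0:ℝ) ≤ (mR - kR) - 1), ha0, hb0]
    have hb1 : 4*(mR - kR)^2*(lR - kR) ≤ (lR - mR + 1)*(nR + kR - 2*mR + 1) := by
      have h7 : (3*lR)*(24*nR) ≤ (5*(lR - mR + 1))*(25*(nR + kR - 2*mR + 1)) :=
        mul_le_mul f4 f6 (by linarith) (by linarith)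
      have h8 : (mR - kR)^2*(lR - kR) ≤ mR^2*lR :=
        mul_le_mul hsq (by linarith) hb0 (by positivity)
      have hc1 : 100*(mR^2*lR) ≤ nR*lR := by
        linarith [mul_le_mul_of_nonneg_right h100 (le_of_lt hlpos)]
      linarith [h7, h8, hc1, (mul_pos hD1 hD2).le]
    have hb2 : 2*(mR - kR)^2*(nR - kR)
        ≤ 3*((lR - mR + 1)*(nR + kR - 2*mR + 1)) := by
      have h9 : (mR^2 - mR + 2)*(24*nR) ≤ (lR - mR + 1)*(25*(nR + kR - 2*mR + 1)) :=
        mul_le_mul f7 f6 (by linarith) (by linarith)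
      have h10 : (mR - kR)^2*(nR - kR) ≤ mR^2*nR :=
        mul_le_mul hsq (by linarith) ha0 (by positivity)
      have hq : (0:ℝ) ≤ (22*mR^2 - 72*mR + 144)*nR := by
        apply mul_nonneg _ (le_of_lt hnpos)
        linarith [sq_nonneg (mR - 2)]
      linarith [h9, h10, hq]
    linarith [mul_le_mul_of_nonneg_left hid (le_of_lt hμ0), hb1, hb2]
  have h6 : (mR - kR) * (((nR - kR) * lR) / ((lR - mR + 1) * (mR*(nR - mR)))
      + ((nR - kR) * (lR - kR)) / ((lR - mR + 1)*(nR + kR - 2*mR + 1)))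
      ≤ (mR - kR) + 4 := by
    rw [mul_add]; linarith
  have h7 := (le_div_iff₀' hμ0).mpr h6
  calc ((nR - kR) * lR) / ((lR - mR + 1) * (mR*(nR - mR)))
      + ((nR - kR) * (lR - kR)) / ((lR - mR + 1)*(nR + kR - 2*mR + 1))
      ≤ ((mR - kR) + 4)/(mR - kR) := h7
    _ = 1 + 4/(mR - kR) := by field_simp
set_option maxHeartbeats 3200000 in
theorem stmt_14 :
    ∃ c : ℝ, 0 < c ∧ c < 1 ∧ ∃ ρ : ℝ, 0 < ρ ∧ ∃ n₀ : ℕ,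
      ∀ n : ℕ, n₀ ≤ n → ∀ m : ℕ, 1 ≤ m → (m : ℝ) ^ 2 ≤ c * n →
      ∀ l₀ : ℕ, m ^ 2 < l₀ → l₀ ≤ n →
      ∀ U : Finset (Finset ℕ), U.Nonempty → U ⊆ (Finset.Icc 1 n).powersetCard m →
      ∃ g : Finset ℕ, g ⊆ Finset.Icc 1 n ∧
        (g.card : ℝ) ≤ sparsity n m U / Real.log ((l₀ : ℝ) / (m : ℝ) ^ 2) ∧
        ((extFam n (U.filter (fun s => g ⊆ s)) l₀).card : ℝ) ≥
          ((n - g.card).choose (l₀ - g.card) : ℝ) * (1 - Real.exp (-ρ)) := by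
  refine ⟨1/100, by norm_num, by norm_num, Real.log (64/63),
    Real.log_pos (by norm_num), 100, ?_⟩
  intro n hn100 m hm1 hmn l₀ hl₀ hl₀n U hU hUsub
  -- basic numeric facts
  have h100m2 : 100 * m^2 ≤ n := by
    have h : (100 : ℝ) * ((m:ℝ)^2) ≤ (n:ℝ) := by nlinarith
    exact_mod_cast h
  have hmm2 : m ≤ m^2 := by nlinarith
  have hmn' : m ≤ n := by omega
  have h2ml₀ : 2*m ≤ l₀ := by nlinarith
  have h2mn : 2*m ≤ n := by omega
  have h10m : 10*m ≤ n := by omega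
  have h50m : 50*m ≤ n := by omega
  have hml₀ : m ≤ l₀ := by omega
  have hmln : m < n := by omega
  have hl₀pos : 0 < l₀ := by omega
  have hUmem : ∀ s ∈ U, s ⊆ Finset.Icc 1 n ∧ s.card = m := by
    intro s hs
    have := hUsub hs
    rwa [Finset.mem_powersetCard] at this
  -- the greedy weight
  have hIcard : (Finset.Icc 1 n).card = n := by simp [Nat.card_Icc]
  set rt : ℝ := (m:ℝ) * ((n:ℝ) - (m:ℝ)) / (l₀:ℝ) with hrt
  have hnm_pos : (0:ℝ) < (n:ℝ) - (m:ℝ) := by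
    have h : (m:ℝ) < (n:ℝ) := by exact_mod_cast hmln
    linarith
  have hmR : (1:ℝ) ≤ (m:ℝ) := by exact_mod_cast hm1
  have hl₀R : (0:ℝ) < (l₀:ℝ) := by exact_mod_cast hl₀pos
  have hrtpos : 0 < rt := by
    rw [hrt]; positivity
  obtain ⟨g, hgS, hgmax⟩ := Finset.exists_max_image (Finset.Icc 1 n).powerset
    (fun g => ((U.filter (fun s => g ⊆ s)).card : ℝ) * rt ^ g.card)
    ⟨∅, Finset.empty_mem_powerset _⟩
  have hgI : g ⊆ Finset.Icc 1 n := Finset.mem_powerset.mp hgS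
  set V := U.filter (fun s => g ⊆ s) with hV
  set k := g.card with hk
  have hφ0 : (U.card : ℝ) ≤ (V.card : ℝ) * rt ^ k := by
    have h := hgmax ∅ (Finset.empty_mem_powerset _)
    simp only [Finset.filter_true_of_mem (fun (s : Finset ℕ) (_ : s ∈ U) => Finset.empty_subset s),
      Finset.card_empty, pow_zero, mul_one] at h
    exact h
  have hUpos : 0 < U.card := Finset.card_pos.mpr hU
  have hUposR : (0:ℝ) < (U.card : ℝ) := by exact_mod_cast hUpos
  have hVpos : 0 < V.card := by
    rcases Nat.eq_zero_or_pos V.card with h0 | h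
    · exfalso; rw [h0] at hφ0; simp at hφ0; exact hU.ne_empty hφ0
    · exact h
  obtain ⟨s₀, hs₀V⟩ := Finset.card_pos.mp hVpos
  have hs₀U : s₀ ∈ U := (Finset.mem_filter.mp hs₀V).1
  have hgs₀ : g ⊆ s₀ := (Finset.mem_filter.mp hs₀V).2
  have hs₀m : s₀.card = m := (hUmem s₀ hs₀U).2
  have hkm : k ≤ m := by
    rw [hk, ← hs₀m]; exact Finset.card_le_card hgs₀
  have hkn : k ≤ n := le_trans hkm hmn'
  have hkl₀ : k ≤ l₀ := le_trans hkm hml₀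
  set N := n - k with hN
  set m' := m - k with hm'
  set l' := l₀ - k with hl'
  have hl'N : l' ≤ N := by omega
  have h2m'l' : 2*m' ≤ l' := by omega
  have hm'l' : m' ≤ l' := by omega
  have h2m'N : 2*m' ≤ N := by omega
  set X := Finset.Icc 1 n \ g with hX
  have hXcard : X.card = N := by rw [hX, Finset.card_sdiff_of_subset hgI, hIcard]
  have hXI : X ⊆ Finset.Icc 1 n := Finset.sdiff_subset
  -- members of V
  have hVmem : ∀ s ∈ V, s ∈ U ∧ g ⊆ s := by
    intro s hs; exact ⟨(Finset.mem_filter.mp hs).1, (Finset.mem_filter.mp hs).2⟩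
  -- V' : shifted family
  set V' := V.image (fun s => s \ g) with hV'
  have hV'card : V'.card = V.card := by
    rw [hV']
    apply Finset.card_image_of_injOn
    intro s₁ h₁ s₂ h₂ he
    have hg₁ : g ⊆ s₁ := (Finset.mem_filter.mp h₁).2
    have hg₂ : g ⊆ s₂ := (Finset.mem_filter.mp h₂).2
    have he' : s₁ \ g = s₂ \ g := he
    rw [← Finset.sdiff_union_of_subset hg₁, ← Finset.sdiff_union_of_subset hg₂, he']
  have hV'mem : ∀ s' ∈ V', s' ⊆ X ∧ s'.card = m' := by
    intro s' hs'
    obtain ⟨s, hsV, rfl⟩ := Finset.mem_image.mp hs'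
    obtain ⟨hsU, hgs⟩ := hVmem s hsV
    constructor
    · rw [hX]; exact Finset.sdiff_subset_sdiff (hUmem s hsU).1 (le_refl g)
    · rw [Finset.card_sdiff_of_subset hgs, (hUmem s hsU).2]
  have hV'sub : V' ⊆ X.powersetCard m' := by
    intro s' hs'
    rw [Finset.mem_powersetCard]
    exact ⟨(hV'mem s' hs').1, (hV'mem s' hs').2⟩
  have hVle : V.card ≤ N.choose m' := by
    rw [← hV'card, ← hXcard, ← Finset.card_powersetCard]
    exact Finset.card_le_card hV'sub
  -- ===== sparsity bound =====
  have hrgt1 : (1:ℝ) < (l₀:ℝ)/(m:ℝ)^2 := by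
    rw [lt_div_iff₀ (by positivity)]
    have : ((m^2 : ℕ) : ℝ) < ((l₀ : ℕ) : ℝ) := by exact_mod_cast hl₀
    push_cast at this
    linarith
  have hlogr : 0 < Real.log ((l₀:ℝ)/(m:ℝ)^2) := Real.log_pos hrgt1
  have hUrk : (U.card : ℝ) * ((l₀:ℝ)/(m:ℝ)^2) ^ k ≤ (n.choose m : ℝ) := by
    have hfall := falling_bound n m h2mn k hkm
    have hfallR : ((n-k).choose (m-k) : ℝ) * (((n:ℝ) - (m:ℝ)))^k
        ≤ (n.choose m : ℝ) * (m:ℝ)^k := by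
      have hc := (Nat.cast_le (α := ℝ)).mpr hfall
      push_cast at hc
      rwa [Nat.cast_sub hmn'] at hc
    have hstep1 : (U.card : ℝ) ≤ (N.choose m' : ℝ) * rt ^ k := by
      refine le_trans hφ0 (mul_le_mul_of_nonneg_right ?_ (by positivity))
      exact_mod_cast hVle
    have hprod : ((l₀:ℝ)/(m:ℝ)^2) * rt = ((n:ℝ) - (m:ℝ)) / (m:ℝ) := by
      rw [hrt]; field_simp
    calc (U.card : ℝ) * ((l₀:ℝ)/(m:ℝ)^2) ^ k
        ≤ ((N.choose m' : ℝ) * rt ^ k) * ((l₀:ℝ)/(m:ℝ)^2) ^ k :=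
          mul_le_mul_of_nonneg_right hstep1 (by positivity)
      _ = (N.choose m' : ℝ) * (((l₀:ℝ)/(m:ℝ)^2) * rt) ^ k := by
          rw [mul_pow]; ring
      _ = (N.choose m' : ℝ) * (((n:ℝ) - (m:ℝ)) / (m:ℝ)) ^ k := by rw [hprod]
      _ ≤ (n.choose m : ℝ) := by
          rw [div_pow, ← mul_div_assoc, div_le_iff₀ (by positivity : (0:ℝ) < (m:ℝ)^k)]
          exact hfallR
  have hsparse : (k : ℝ) ≤ sparsity n m U / Real.log ((l₀:ℝ)/(m:ℝ)^2) := by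
    rw [le_div_iff₀ hlogr]
    have hlog1 : Real.log ((U.card : ℝ) * ((l₀:ℝ)/(m:ℝ)^2) ^ k) ≤ Real.log (n.choose m) :=
      Real.log_le_log (by positivity) hUrk
    rw [Real.log_mul (by positivity) (by positivity), Real.log_pow] at hlog1
    rw [sparsity]
    linarith
  -- ===== spreadness =====
  have hdisjXg : ∀ h : Finset ℕ, h ⊆ X → Disjoint h g := by
    intro h hhX
    exact Finset.disjoint_of_subset_left hhX Finset.sdiff_disjoint
  have hspread : ∀ h : Finset ℕ, h ⊆ X →
      ((V'.filter (fun s' => h ⊆ s')).card : ℝ) * rt ^ h.card ≤ (V.card : ℝ) := by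
    intro h hhX
    have hcard_eq : (V'.filter (fun s' => h ⊆ s')).card
        = (U.filter (fun s => g ∪ h ⊆ s)).card := by
      apply Finset.card_bij (fun s' _ => s' ∪ g)
      · intro s' hs'
        simp only [Finset.mem_filter] at hs' ⊢
        obtain ⟨hs'V', hhs'⟩ := hs'
        obtain ⟨s, hsV, rfl⟩ := Finset.mem_image.mp hs'V'
        have hgs : g ⊆ s := (Finset.mem_filter.mp hsV).2
        rw [Finset.sdiff_union_of_subset hgs]
        exact ⟨(Finset.mem_filter.mp hsV).1,
          Finset.union_subset hgs (hhs'.trans Finset.sdiff_subset)⟩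
      · intro a ha b hb he
        have hda : Disjoint a g := Finset.disjoint_of_subset_left
          ((hV'mem a (Finset.mem_filter.mp ha).1).1) Finset.sdiff_disjoint
        have hdb : Disjoint b g := Finset.disjoint_of_subset_left
          ((hV'mem b (Finset.mem_filter.mp hb).1).1) Finset.sdiff_disjoint
        rw [← Finset.sdiff_eq_self_of_disjoint hda, ← Finset.union_sdiff_right,
          he, Finset.union_sdiff_right, Finset.sdiff_eq_self_of_disjoint hdb]
      · intro s hs
        simp only [Finset.mem_filter] at hs
        obtain ⟨hsU, hgh⟩ := hs
        have hgs : g ⊆ s := (Finset.union_subset_iff.mp hgh).1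
        have hhs : h ⊆ s := (Finset.union_subset_iff.mp hgh).2
        refine ⟨s \ g, ?_, ?_⟩
        · simp only [Finset.mem_filter]
          refine ⟨Finset.mem_image.mpr ⟨s, ?_, rfl⟩, ?_⟩
          · rw [hV, Finset.mem_filter]; exact ⟨hsU, hgs⟩
          · exact Finset.subset_sdiff.mpr ⟨hhs, hdisjXg h hhX⟩
        · rw [Finset.sdiff_union_of_subset hgs]
    rw [hcard_eq]
    have hghS : g ∪ h ∈ (Finset.Icc 1 n).powerset :=
      Finset.mem_powerset.mpr (Finset.union_subset hgI (hhX.trans hXI))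
    have hmax := hgmax (g ∪ h) hghS
    have hcardu : (g ∪ h).card = k + h.card := by
      rw [Finset.card_union_of_disjoint (hdisjXg h hhX).symm]
    rw [hcardu, pow_add] at hmax
    have hrk : (0:ℝ) < rt ^ k := by positivity
    have h2 : (((U.filter (fun s => g ∪ h ⊆ s)).card : ℝ) * rt ^ h.card) * rt ^ k
        ≤ (V.card : ℝ) * rt ^ k := by
      calc (((U.filter (fun s => g ∪ h ⊆ s)).card : ℝ) * rt ^ h.card) * rt ^ k
          = ((U.filter (fun s => g ∪ h ⊆ s)).card : ℝ) * (rt ^ k * rt ^ h.card) := by ring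
        _ ≤ (V.card : ℝ) * rt ^ k := hmax
    exact le_of_mul_le_mul_right h2 hrk
  -- ===== the counting function =====
  set cnt : Finset ℕ → ℕ := fun T => (V'.filter (fun s' => s' ⊆ T)).card with hcnt
  -- S1
  have hS1 : ∑ T ∈ X.powersetCard l', cnt T = V.card * ((N - m').choose (l' - m')) := by
    have e1 : ∀ T ∈ X.powersetCard l', cnt T = ∑ s' ∈ V', (if s' ⊆ T then 1 else 0) := by
      intro T _; rw [hcnt]; exact Finset.card_filter _ _
    rw [Finset.sum_congr rfl e1, Finset.sum_comm]
    have e2 : ∀ s' ∈ V', ∑ T ∈ X.powersetCard l', (if s' ⊆ T then 1 else 0)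
        = (N - m').choose (l' - m') := by
      intro s' hs'
      obtain ⟨hs'X, hs'card⟩ := hV'mem s' hs'
      rw [← Finset.card_filter]
      rw [card_filter_superset X s' l' hs'X (by omega : s'.card ≤ l')]
      rw [hXcard, hs'card]
    rw [Finset.sum_congr rfl e2, Finset.sum_const, smul_eq_mul, hV'card]
  -- ===== S2 (ℕ level) =====
  set A : ℕ → ℕ := fun j => ((N - 2*m') + j).choose ((l' - 2*m') + j) with hA
  have hAm' : A m' = (N - m').choose (l' - m') := by
    simp only [hA]
    congr 1 <;> omega
  have hS2 : ∑ T ∈ X.powersetCard l', (cnt T)^2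
      ≤ ∑ s' ∈ V', ∑ h ∈ s'.powerset,
          (V'.filter (fun s'' => h ⊆ s'')).card * A h.card := by
    have e1 : ∀ T ∈ X.powersetCard l',
        (cnt T)^2 = ∑ s' ∈ V', ∑ s'' ∈ V', (if s' ∪ s'' ⊆ T then 1 else 0) := by
      intro T _
      simp only [hcnt]
      rw [Finset.card_filter, sq, Finset.sum_mul_sum]
      apply Finset.sum_congr rfl; intro s' _
      apply Finset.sum_congr rfl; intro s'' _
      by_cases h1 : s' ⊆ T <;> by_cases h2 : s'' ⊆ T <;>
        simp [h1, h2, Finset.union_subset_iff]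
    rw [Finset.sum_congr rfl e1, Finset.sum_comm]
    have e2 : ∀ s' ∈ V',
        ∑ T ∈ X.powersetCard l', ∑ s'' ∈ V', (if s' ∪ s'' ⊆ T then 1 else 0)
        = ∑ s'' ∈ V', ((X.powersetCard l').filter (fun T => s' ∪ s'' ⊆ T)).card := by
      intro s' _
      rw [Finset.sum_comm]
      apply Finset.sum_congr rfl; intro s'' _
      rw [← Finset.card_filter]
    rw [Finset.sum_congr rfl e2]
    apply Finset.sum_le_sum
    intro s' hs'
    obtain ⟨h1X, h1c⟩ := hV'mem s' hs'
    have e3 : ∀ s'' ∈ V',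
        ((X.powersetCard l').filter (fun T => s' ∪ s'' ⊆ T)).card
          = A ((s'' ∩ s').card) := by
      intro s'' hs''
      obtain ⟨h2X, h2c⟩ := hV'mem s'' hs''
      have hcc : (s' ∪ s'').card = (s'' ∪ s').card := by rw [Finset.union_comm]
      have hiu : (s'' ∩ s').card + (s'' ∪ s').card = m' + m' := by
        rw [Finset.card_inter_add_card_union, h1c, h2c]
      have hUc : (s' ∪ s'').card ≤ 2*m' := by omega
      rw [card_filter_superset X (s' ∪ s'') l' (Finset.union_subset h1X h2X)
        (le_trans hUc h2m'l'), hXcard]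
      simp only [hA]
      have e5 : N - (s' ∪ s'').card = (N - 2*m') + (s'' ∩ s').card := by omega
      have e6 : l' - (s' ∪ s'').card = (l' - 2*m') + (s'' ∩ s').card := by omega
      rw [e5, e6]
    rw [Finset.sum_congr rfl e3]
    have hmaps : ∀ s'' ∈ V', s'' ∩ s' ∈ s'.powerset :=
      fun s'' _ => Finset.mem_powerset.mpr Finset.inter_subset_right
    rw [← Finset.sum_fiberwise_of_maps_to hmaps (fun s'' => A ((s'' ∩ s').card))]
    apply Finset.sum_le_sum
    intro h _
    have e7 : ∀ s'' ∈ V'.filter (fun s'' => s'' ∩ s' = h),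
        A ((s'' ∩ s').card) = A h.card := by
      intro s'' hs''
      rw [(Finset.mem_filter.mp hs'').2]
    rw [Finset.sum_congr rfl e7, Finset.sum_const, smul_eq_mul]
    apply Nat.mul_le_mul_right
    apply Finset.card_le_card
    intro x hx
    obtain ⟨hxV, hxh⟩ := Finset.mem_filter.mp hx
    exact Finset.mem_filter.mpr ⟨hxV, by rw [← hxh]; exact Finset.inter_subset_left⟩
  -- ===== S2 (ℝ level) =====
  have hS2R : (∑ T ∈ X.powersetCard l', ((cnt T : ℝ))^2)
      ≤ (V.card:ℝ)^2 * ∑ j ∈ Finset.range (m'+1),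
          (m'.choose j : ℝ) * (A j : ℝ) * rt⁻¹ ^ j := by
    have hcast : (∑ T ∈ X.powersetCard l', ((cnt T : ℝ))^2)
        = ((∑ T ∈ X.powersetCard l', (cnt T)^2 : ℕ) : ℝ) := by push_cast; rfl
    rw [hcast]
    have h1 : ((∑ T ∈ X.powersetCard l', (cnt T)^2 : ℕ) : ℝ)
        ≤ ((∑ s' ∈ V', ∑ h ∈ s'.powerset,
            (V'.filter (fun s'' => h ⊆ s'')).card * A h.card : ℕ) : ℝ) := by
      exact_mod_cast hS2
    refine le_trans h1 ?_
    push_cast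
    have h2 : ∀ s' ∈ V',
        (∑ h ∈ s'.powerset,
          ((V'.filter (fun s'' => h ⊆ s'')).card : ℝ) * (A h.card : ℝ))
        ≤ (V.card:ℝ) * ∑ j ∈ Finset.range (m'+1),
            (m'.choose j : ℝ) * (A j : ℝ) * rt⁻¹ ^ j := by
      intro s' hs'
      obtain ⟨hs'X, hs'c⟩ := hV'mem s' hs'
      have h3 : ∀ h ∈ s'.powerset,
          ((V'.filter (fun s'' => h ⊆ s'')).card : ℝ) * (A h.card : ℝ)
          ≤ ((V.card:ℝ) * rt⁻¹ ^ h.card) * (A h.card : ℝ) := by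
        intro h hh
        apply mul_le_mul_of_nonneg_right _ (by positivity)
        have hhX : h ⊆ X := (Finset.mem_powerset.mp hh).trans hs'X
        have hsp := hspread h hhX
        have hrtj : (0:ℝ) < rt ^ h.card := by positivity
        calc ((V'.filter (fun s'' => h ⊆ s'')).card : ℝ)
            = (((V'.filter (fun s'' => h ⊆ s'')).card : ℝ) * rt ^ h.card) * rt⁻¹ ^ h.card := by
              rw [mul_assoc, ← mul_pow, mul_inv_cancel₀ (ne_of_gt hrtpos), one_pow, mul_one]
          _ ≤ (V.card:ℝ) * rt⁻¹ ^ h.card := mul_le_mul_of_nonneg_right hsp (by positivity)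
      refine le_trans (Finset.sum_le_sum h3) ?_
      apply le_of_eq
      rw [Finset.sum_powerset, hs'c, Finset.mul_sum]
      apply Finset.sum_congr rfl
      intro j _
      have hinner : ∀ h ∈ Finset.powersetCard j s',
          ((V.card:ℝ) * rt⁻¹ ^ h.card) * (A h.card : ℝ)
          = ((V.card:ℝ) * rt⁻¹ ^ j) * (A j : ℝ) := by
        intro h hh
        rw [(Finset.mem_powersetCard.mp hh).2]
      rw [Finset.sum_congr rfl hinner, Finset.sum_const, Finset.card_powersetCard,
        hs'c, nsmul_eq_mul]
      ring
    calc ∑ s' ∈ V', ∑ h ∈ s'.powerset,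
          ((V'.filter (fun s'' => h ⊆ s'')).card : ℝ) * (A h.card : ℝ)
        ≤ ∑ _s' ∈ V', (V.card:ℝ) * ∑ j ∈ Finset.range (m'+1),
            (m'.choose j : ℝ) * (A j : ℝ) * rt⁻¹ ^ j := Finset.sum_le_sum h2
      _ = (V.card:ℝ)^2 * ∑ j ∈ Finset.range (m'+1),
            (m'.choose j : ℝ) * (A j : ℝ) * rt⁻¹ ^ j := by
          rw [Finset.sum_const, nsmul_eq_mul, hV'card]; ring
  -- ===== choose-ratio chains =====
  have hD2pos : 0 < N - 2*m' + 1 := by omega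
  have hD1pos : 0 < l' - m' + 1 := by omega
  set qq : ℝ := (l' : ℝ) / ((N - 2*m' + 1 : ℕ) : ℝ) with hqq
  set ww : ℝ := (N : ℝ) / ((l' - m' + 1 : ℕ) : ℝ) with hww
  have hqq0 : (0:ℝ) ≤ qq := by rw [hqq]; positivity
  have hww0 : (0:ℝ) ≤ ww := by rw [hww]; positivity
  have hAup : ∀ j, j ≤ m' → (A j : ℝ) ≤ (A m' : ℝ) * qq ^ (m' - j) := by
    intro j hj
    have hstep : ∀ t, t < m' - j →
        ((((l' - 2*m') + j) + t + 1 : ℕ) : ℝ) ≤ qq * ((((N - 2*m') + j) + t + 1 : ℕ) : ℝ) := by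
      intro t ht
      have h1 : ((l' - 2*m') + j) + t + 1 ≤ l' := by omega
      have h2 : (N - 2*m' + 1) ≤ ((N - 2*m') + j) + t + 1 := by omega
      have hd : ((N - 2*m' + 1 : ℕ) : ℝ) ≠ 0 := (Nat.cast_pos.mpr hD2pos).ne'
      calc ((((l' - 2*m') + j) + t + 1 : ℕ) : ℝ) ≤ (l' : ℝ) := by exact_mod_cast h1
        _ = qq * ((N - 2*m' + 1 : ℕ) : ℝ) := by rw [hqq]; exact (div_mul_cancel₀ _ hd).symm
        _ ≤ qq * ((((N - 2*m') + j) + t + 1 : ℕ) : ℝ) := by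
            apply mul_le_mul_of_nonneg_left _ hqq0; exact_mod_cast h2
    have hch := chain_up ((N - 2*m') + j) ((l' - 2*m') + j) qq hqq0 (m' - j) hstep
    have e1 : ((N - 2*m') + j) + (m' - j) = (N - 2*m') + m' := by omega
    have e2 : ((l' - 2*m') + j) + (m' - j) = (l' - 2*m') + m' := by omega
    rw [e1, e2] at hch
    simp only [hA]
    exact hch
  have hCdown : ((N.choose l' : ℕ) : ℝ) ≤ (A m' : ℝ) * ww ^ m' := by
    have hstep : ∀ t, t < m' →
        (((N - m') + t + 1 : ℕ) : ℝ) ≤ ww * (((l' - m') + t + 1 : ℕ) : ℝ) := by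
      intro t ht
      have h1 : (N - m') + t + 1 ≤ N := by omega
      have h2 : (l' - m' + 1) ≤ (l' - m') + t + 1 := by omega
      have hd : ((l' - m' + 1 : ℕ) : ℝ) ≠ 0 := (Nat.cast_pos.mpr hD1pos).ne'
      calc (((N - m') + t + 1 : ℕ) : ℝ) ≤ (N : ℝ) := by exact_mod_cast h1
        _ = ww * ((l' - m' + 1 : ℕ) : ℝ) := by rw [hww]; exact (div_mul_cancel₀ _ hd).symm
        _ ≤ ww * (((l' - m') + t + 1 : ℕ) : ℝ) := by
            apply mul_le_mul_of_nonneg_left _ hww0; exact_mod_cast h2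
    have hch := chain_down (N - m') (l' - m') ww hww0 m' hstep
    have e1 : (N - m') + m' = N := by omega
    have e2 : (l' - m') + m' = l' := by omega
    rw [e1, e2] at hch
    rw [hAm']
    exact hch
  -- ===== the numeric core =====
  set xx : ℝ := ww * rt⁻¹ with hxx
  set yy : ℝ := ww * qq with hyy
  have hxx0 : (0:ℝ) ≤ xx := by rw [hxx]; positivity
  have hyy0 : (0:ℝ) ≤ yy := by rw [hyy]; exact mul_nonneg hww0 hqq0
  have hpow64 : (xx + yy) ^ m' ≤ (64:ℝ) := by
    rcases Nat.eq_zero_or_pos m' with h0 | hm'pos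
    · rw [h0, pow_zero]; norm_num
    · have hm'R0 : (0:ℝ) < ((m':ℕ):ℝ) := by exact_mod_cast hm'pos
      have hkm1 : k + 1 ≤ m := by omega
      have hkR1 : (k:ℝ) + 1 ≤ (m:ℝ) := by exact_mod_cast hkm1
      have hnR : (100:ℝ) ≤ (n:ℝ) := by exact_mod_cast hn100
      have h10mR : 10*(m:ℝ) ≤ (n:ℝ) := by
        have : ((10*m : ℕ):ℝ) ≤ ((n:ℕ):ℝ) := by exact_mod_cast h10m
        push_cast at this; linarith
      have h50mR : 50*(m:ℝ) ≤ (n:ℝ) := by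
        have : ((50*m : ℕ):ℝ) ≤ ((n:ℕ):ℝ) := by exact_mod_cast h50m
        push_cast at this; linarith
      have h100m2R : 100*(m:ℝ)^2 ≤ (n:ℝ) := by
        have : ((100 * m^2 : ℕ) : ℝ) ≤ ((n:ℕ):ℝ) := by exact_mod_cast h100m2
        push_cast at this; linarith
      have hm2l₀R : (m:ℝ)^2 + 1 ≤ (l₀:ℝ) := by
        have h : m^2 + 1 ≤ l₀ := by omega
        have : ((m^2 + 1 : ℕ) : ℝ) ≤ ((l₀:ℕ):ℝ) := by exact_mod_cast h
        push_cast at this; linarith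
      have hl₀nR : (l₀:ℝ) ≤ (n:ℝ) := by exact_mod_cast hl₀n
      have hNc : ((N:ℕ):ℝ) = (n:ℝ) - k := by rw [hN, Nat.cast_sub hkn]
      have hl'c : ((l':ℕ):ℝ) = (l₀:ℝ) - k := by rw [hl', Nat.cast_sub hkl₀]
      have hm'c : ((m':ℕ):ℝ) = (m:ℝ) - k := by rw [hm', Nat.cast_sub hkm]
      have hD1c : ((l' - m' + 1 : ℕ):ℝ) = (l₀:ℝ) - m + 1 := by
        have e : l' - m' + 1 = (l₀ + 1) - m := by omega
        rw [e, Nat.cast_sub (by omega)]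
        push_cast; ring
      have hD2c : ((N - 2*m' + 1 : ℕ):ℝ) = (n:ℝ) + k - 2*m + 1 := by
        have e : N - 2*m' + 1 = (n + k + 1) - 2*m := by omega
        rw [e, Nat.cast_sub (by omega)]
        push_cast; ring
      have hrtinv : rt⁻¹ = (l₀:ℝ) / ((m:ℝ) * ((n:ℝ) - m)) := by rw [hrt, inv_div]
      have hxx_eq : xx = (((n:ℝ)-k)*(l₀:ℝ)) /
          (((l₀:ℝ)-m+1)*((m:ℝ)*((n:ℝ)-m))) := by
        rw [hxx, hww, hrtinv, div_mul_div_comm, hNc, hD1c]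
      have hyy_eq : yy = (((n:ℝ)-k)*((l₀:ℝ)-k)) /
          (((l₀:ℝ)-m+1)*((n:ℝ)+k-2*m+1)) := by
        rw [hyy, hww, hqq, div_mul_div_comm, hNc, hl'c, hD1c, hD2c]
      have hkey : xx + yy ≤ 1 + 4/((m':ℕ):ℝ) := by
        rw [hxx_eq, hyy_eq, hm'c]
        exact key_xy (m:ℝ) (k:ℝ) (n:ℝ) (l₀:ℝ) hmR (Nat.cast_nonneg k) hkR1
          hm2l₀R hl₀nR h100m2R hnR h10mR h50mR
      have hm'ne : ((m':ℕ):ℝ) ≠ 0 := ne_of_gt hm'R0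
      calc (xx + yy) ^ m' ≤ (1 + 4/((m':ℕ):ℝ)) ^ m' := by
            apply pow_le_pow_left₀ (by linarith) hkey
        _ ≤ (Real.exp (4/((m':ℕ):ℝ))) ^ m' := by
            apply pow_le_pow_left₀ (by positivity)
            linarith [Real.add_one_le_exp (4/((m':ℕ):ℝ))]
        _ = Real.exp (((m':ℕ):ℝ) * (4/((m':ℕ):ℝ))) := (Real.exp_nat_mul _ m').symm
        _ = Real.exp 4 := by
            congr 1
            field_simp
        _ ≤ 64 := by
            have h1 := Real.exp_one_lt_d9
            have h4 : Real.exp (4:ℝ) = (Real.exp 1)^4 := by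
              rw [← Real.exp_nat_mul]; norm_num
            have h5 : (Real.exp 1)^4 ≤ (2.7182818286:ℝ)^4 :=
              pow_le_pow_left₀ (le_of_lt (Real.exp_pos 1)) (le_of_lt h1) 4
            have h6 : (2.7182818286:ℝ)^4 ≤ 64 := by norm_num
            rw [h4]; linarith
  -- ===== main inequality =====
  have hmain : (1/64 : ℝ) * (N.choose l' : ℝ) *
      (∑ j ∈ Finset.range (m'+1), (m'.choose j : ℝ) * (A j : ℝ) * rt⁻¹ ^ j)
      ≤ (A m' : ℝ)^2 := by
    have hS'0 : (0:ℝ) ≤ ∑ j ∈ Finset.range (m'+1),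
        (m'.choose j : ℝ) * qq ^ (m'-j) * rt⁻¹ ^ j := by
      apply Finset.sum_nonneg
      intro j _
      positivity
    have hsum1 : (∑ j ∈ Finset.range (m'+1), (m'.choose j : ℝ) * (A j : ℝ) * rt⁻¹ ^ j)
        ≤ (A m' : ℝ) * ∑ j ∈ Finset.range (m'+1),
            (m'.choose j : ℝ) * qq ^ (m'-j) * rt⁻¹ ^ j := by
      rw [Finset.mul_sum]
      apply Finset.sum_le_sum
      intro j hj
      have hj' : j ≤ m' := Nat.lt_succ_iff.mp (Finset.mem_range.mp hj)
      calc (m'.choose j : ℝ) * (A j : ℝ) * rt⁻¹ ^ j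
          ≤ (m'.choose j : ℝ) * ((A m' : ℝ) * qq ^ (m'-j)) * rt⁻¹ ^ j := by
            apply mul_le_mul_of_nonneg_right _ (by positivity)
            exact mul_le_mul_of_nonneg_left (hAup j hj') (by positivity)
        _ = (A m':ℝ) * ((m'.choose j : ℝ) * qq ^ (m'-j) * rt⁻¹ ^ j) := by ring
    have hbinom : ww ^ m' * ∑ j ∈ Finset.range (m'+1),
        (m'.choose j : ℝ) * qq ^ (m'-j) * rt⁻¹ ^ j = (xx + yy) ^ m' := by
      rw [add_pow, Finset.mul_sum]
      apply Finset.sum_congr rfl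
      intro j hj
      have hj' : j ≤ m' := Nat.lt_succ_iff.mp (Finset.mem_range.mp hj)
      have e : j + (m' - j) = m' := by omega
      rw [hxx, hyy]
      calc ww ^ m' * ((m'.choose j : ℝ) * qq ^ (m'-j) * rt⁻¹ ^ j)
          = (ww^j * rt⁻¹^j) * (ww^(m'-j) * qq^(m'-j)) * (m'.choose j : ℝ) := by
            rw [show ww ^ m' = ww ^ (j + (m'-j)) by rw [e], pow_add]; ring
        _ = (ww * rt⁻¹)^j * (ww*qq)^(m'-j) * (m'.choose j:ℝ) := by
            rw [mul_pow, mul_pow]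
    have hA20 : (0:ℝ) ≤ (A m' : ℝ) := Nat.cast_nonneg _
    calc (1/64 : ℝ) * (N.choose l' : ℝ) *
        (∑ j ∈ Finset.range (m'+1), (m'.choose j : ℝ) * (A j : ℝ) * rt⁻¹ ^ j)
        ≤ (1/64 : ℝ) * (N.choose l' : ℝ) * ((A m' : ℝ) * ∑ j ∈ Finset.range (m'+1),
            (m'.choose j : ℝ) * qq ^ (m'-j) * rt⁻¹ ^ j) := by
          apply mul_le_mul_of_nonneg_left hsum1 (by positivity)
      _ ≤ (1/64 : ℝ) * ((A m' : ℝ) * ww ^ m') * ((A m' : ℝ) * ∑ j ∈ Finset.range (m'+1),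
            (m'.choose j : ℝ) * qq ^ (m'-j) * rt⁻¹ ^ j) := by
          apply mul_le_mul_of_nonneg_right _ (mul_nonneg hA20 hS'0)
          apply mul_le_mul_of_nonneg_left hCdown (by norm_num)
      _ = (1/64 : ℝ) * ((A m' : ℝ)^2) * (ww ^ m' * ∑ j ∈ Finset.range (m'+1),
            (m'.choose j : ℝ) * qq ^ (m'-j) * rt⁻¹ ^ j) := by ring
      _ = (1/64 : ℝ) * ((A m' : ℝ)^2) * ((xx + yy) ^ m') := by rw [hbinom]
      _ ≤ (1/64 : ℝ) * ((A m' : ℝ)^2) * 64 := by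
          apply mul_le_mul_of_nonneg_left hpow64 (by positivity)
      _ = (A m' : ℝ)^2 := by ring
  -- ===== support set and Cauchy-Schwarz =====
  set Psupp := (X.powersetCard l').filter (fun T => ∃ s' ∈ V', s' ⊆ T) with hPsupp
  have hsum_eq : ∑ T ∈ Psupp, (cnt T) = ∑ T ∈ X.powersetCard l', (cnt T) := by
    apply Finset.sum_filter_of_ne
    intro T _ hne
    have hpos : 0 < cnt T := Nat.pos_of_ne_zero hne
    have hne2 : (V'.filter (fun s' => s' ⊆ T)).Nonempty := by
      apply Finset.card_pos.mp
      simpa [hcnt] using hpos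
    obtain ⟨s', hs'⟩ := hne2
    exact ⟨s', (Finset.mem_filter.mp hs').1, (Finset.mem_filter.mp hs').2⟩
  have hCS : ((∑ T ∈ X.powersetCard l', cnt T : ℕ) : ℝ)^2
      ≤ (Psupp.card : ℝ) * ∑ T ∈ X.powersetCard l', (cnt T : ℝ)^2 := by
    have hcs := Finset.sum_mul_sq_le_sq_mul_sq Psupp (fun _ => (1:ℝ))
      (fun T => (cnt T : ℝ))
    simp only [one_pow, one_mul] at hcs
    rw [Finset.sum_const, nsmul_eq_mul, mul_one] at hcs
    calc ((∑ T ∈ X.powersetCard l', cnt T : ℕ) : ℝ)^2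
        = (∑ T ∈ Psupp, (cnt T : ℝ))^2 := by
          rw [← hsum_eq]; push_cast; rfl
      _ ≤ (Psupp.card : ℝ) * ∑ T ∈ Psupp, (cnt T : ℝ)^2 := hcs
      _ ≤ (Psupp.card : ℝ) * ∑ T ∈ X.powersetCard l', (cnt T : ℝ)^2 := by
          apply mul_le_mul_of_nonneg_left _ (by positivity)
          apply Finset.sum_le_sum_of_subset_of_nonneg (Finset.filter_subset _ _)
          intro T _ _
          positivity
  -- positivity of the second moment
  have hS2pos : (0:ℝ) < ∑ T ∈ X.powersetCard l', (cnt T : ℝ)^2 := by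
    have hs₀' : s₀ \ g ∈ V' := Finset.mem_image.mpr ⟨s₀, hs₀V, rfl⟩
    obtain ⟨hs₀'X, hs₀'c⟩ := hV'mem _ hs₀'
    have hfilpos : 0 < ((X.powersetCard l').filter (fun T => (s₀ \ g) ⊆ T)).card := by
      rw [card_filter_superset X (s₀ \ g) l' hs₀'X (by omega : (s₀ \ g).card ≤ l')]
      · rw [hXcard, hs₀'c]
        exact Nat.choose_pos (by omega)
    obtain ⟨T₀, hT₀⟩ := Finset.card_pos.mp hfilpos
    obtain ⟨hT₀P, hT₀s⟩ := Finset.mem_filter.mp hT₀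
    have hcntpos : 0 < cnt T₀ := by
      simp only [hcnt]
      exact Finset.card_pos.mpr ⟨s₀ \ g, Finset.mem_filter.mpr ⟨hs₀', hT₀s⟩⟩
    have h1 : (1:ℝ) ≤ (cnt T₀ : ℝ)^2 := by
      have h2 : (1:ℝ) ≤ (cnt T₀ : ℝ) := by exact_mod_cast hcntpos
      calc (1:ℝ) = 1^2 := by norm_num
        _ ≤ (cnt T₀ : ℝ)^2 := pow_le_pow_left₀ (by norm_num) h2 2
    calc (0:ℝ) < 1 := one_pos
      _ ≤ (cnt T₀:ℝ)^2 := h1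
      _ ≤ ∑ T ∈ X.powersetCard l', (cnt T : ℝ)^2 :=
          Finset.single_le_sum (f := fun T => (cnt T : ℝ)^2)
            (fun T _ => by positivity) hT₀P
  -- combine everything
  have hfinal1 : (1/64:ℝ) * (N.choose l' : ℝ) ≤ (Psupp.card : ℝ) := by
    have hchain : ((1/64:ℝ) * (N.choose l':ℝ)) * (∑ T ∈ X.powersetCard l', (cnt T:ℝ)^2)
        ≤ (Psupp.card : ℝ) * (∑ T ∈ X.powersetCard l', (cnt T:ℝ)^2) := by
      calc ((1/64:ℝ) * (N.choose l':ℝ)) * (∑ T ∈ X.powersetCard l', (cnt T:ℝ)^2)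
          ≤ ((1/64:ℝ) * (N.choose l':ℝ)) * ((V.card:ℝ)^2 * ∑ j ∈ Finset.range (m'+1),
              (m'.choose j : ℝ) * (A j : ℝ) * rt⁻¹ ^ j) := by
            apply mul_le_mul_of_nonneg_left hS2R (by positivity)
        _ = (V.card:ℝ)^2 * ((1/64:ℝ) * (N.choose l':ℝ) * ∑ j ∈ Finset.range (m'+1),
              (m'.choose j : ℝ) * (A j : ℝ) * rt⁻¹ ^ j) := by ring
        _ ≤ (V.card:ℝ)^2 * (A m':ℝ)^2 := by
            apply mul_le_mul_of_nonneg_left hmain (by positivity)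
        _ = ((V.card:ℝ) * (A m':ℝ))^2 := by ring
        _ = ((∑ T ∈ X.powersetCard l', cnt T : ℕ):ℝ)^2 := by
            rw [hS1, hAm']
            push_cast
            ring
        _ ≤ (Psupp.card:ℝ) * (∑ T ∈ X.powersetCard l', (cnt T:ℝ)^2) := hCS
    exact le_of_mul_le_mul_right hchain hS2pos
  -- injection into extFam
  have hinj : Psupp.card ≤ (extFam n V l₀).card := by
    apply Finset.card_le_card_of_injOn (fun T => T ∪ g)
    · intro T hT
      obtain ⟨hTP, hTex⟩ := Finset.mem_filter.mp hT
      obtain ⟨hTX, hTc⟩ := Finset.mem_powersetCard.mp hTP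
      have hdT : Disjoint T g := Finset.disjoint_of_subset_left hTX Finset.sdiff_disjoint
      simp only [Finset.mem_coe, extFam, Finset.mem_filter, Finset.mem_powersetCard]
      refine ⟨⟨Finset.union_subset (hTX.trans hXI) hgI, ?_⟩, ?_⟩
      · rw [Finset.card_union_of_disjoint hdT, hTc]
        omega
      · obtain ⟨s', hs'V', hs'T⟩ := hTex
        obtain ⟨s, hsV, rfl⟩ := Finset.mem_image.mp hs'V'
        refine ⟨s, hsV, ?_⟩
        calc s = (s \ g) ∪ g := (Finset.sdiff_union_of_subset (hVmem s hsV).2).symm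
          _ ⊆ T ∪ g := Finset.union_subset_union_left hs'T
    · intro a ha b hb he
      have ha' : a ⊆ X := (Finset.mem_powersetCard.mp (Finset.mem_filter.mp ha).1).1
      have hb' : b ⊆ X := (Finset.mem_powersetCard.mp (Finset.mem_filter.mp hb).1).1
      have hda : Disjoint a g := Finset.disjoint_of_subset_left ha' Finset.sdiff_disjoint
      have hdb : Disjoint b g := Finset.disjoint_of_subset_left hb' Finset.sdiff_disjoint
      have he' : a ∪ g = b ∪ g := he
      rw [← Finset.sdiff_eq_self_of_disjoint hda, ← Finset.union_sdiff_right, he',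
        Finset.union_sdiff_right, Finset.sdiff_eq_self_of_disjoint hdb]
  -- ===== finish =====
  refine ⟨g, hgI, hsparse, ?_⟩
  have hexp : (1 : ℝ) - Real.exp (-(Real.log (64/63))) = 1/64 := by
    rw [Real.exp_neg, Real.exp_log (by norm_num : (0:ℝ) < 64/63)]
    norm_num
  rw [ge_iff_le, hexp, ← hk, ← hV, ← hN, ← hl']
  have h2 : (Psupp.card : ℝ) ≤ ((extFam n V l₀).card : ℝ) := by exact_mod_cast hinj
  calc ((N.choose l' : ℕ) : ℝ) * (1/64)
      = (1/64:ℝ) * (N.choose l' : ℝ) := by ring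
    _ ≤ (Psupp.card : ℝ) := hfinal1
    _ ≤ ((extFam n V l₀).card : ℝ) := h2
end

section
/- There exist constants c ∈ (0, 1/2), a real η₀ ≥ 1 and a natural number n₀ such that the following holds: for every n ≥ n₀, every integer m ≥ 2, every real η ≥ η₀ with m²·η·ln n ≤ c·n, and every nonempty family U of m-element subsets of [n] with κ(U) ≤ c·m·ln η, the family U contains a Δ-sunflower with Δ ≥ c·n/(m²·η·ln n) whose core has size at most 2·κ(U)/ln η; that is, there exist pairwise distinct sets s₁, …, s_Δ ∈ U and a set c₀ ⊆ [n] with |c₀| ≤ 2·κ(U)/ln η such that s_i ∩ s_j = c₀ for all i ≠ j. -/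
open Finset

lemma sunflower_key (n m D : ℕ) (η K : ℝ) (hη : 1 < η)
    (hmn : m ≤ n) (hm2 : 2 ≤ m) (hD1 : 1 ≤ D)
    (hKm : K / Real.log η ≤ (m : ℝ) / 2)
    (hdrop : ∀ m' : ℕ, 1 ≤ m' → m' ≤ m → ((D : ℝ) * m * m') * η ≤ (n : ℝ) - m' + 1) :
    ∀ m' : ℕ, m' ≤ m → ∀ V : Finset (Finset ℕ), V.Nonempty →
      V ⊆ (Finset.Icc 1 n).powersetCard m' → 1 ≤ m' →
      Real.log (n.choose m') - Real.log V.card ≤ K - ((m : ℝ) - m') * Real.log η →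
      ∃ (C : Finset ℕ) (M : Finset (Finset ℕ)),
        C ⊆ Finset.Icc 1 n ∧
        (C.card : ℝ) * Real.log η ≤ Real.log (n.choose m') - Real.log V.card ∧
        D ≤ M.card ∧
        (∀ a ∈ M, ∀ b ∈ M, a ≠ b → Disjoint a b) ∧
        (∀ v ∈ M, Disjoint v C ∧ v ∪ C ∈ V) := by
  have hlogη : 0 < Real.log η := Real.log_pos hη
  intro m'
  induction m' with
  | zero => intro _ _ _ _ h; omega
  | succ m' ih =>
    intro hm'le V hVne hVsub _ hbudget
    -- basic facts about V
    have hVmem : ∀ S ∈ V, S ⊆ Finset.Icc 1 n ∧ S.card = m' + 1 := by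
      intro S hS
      have := hVsub hS
      rw [Finset.mem_powersetCard] at this
      exact this
    have hV1 : 1 ≤ V.card := Finset.card_pos.mpr hVne
    have hVle : V.card ≤ n.choose (m' + 1) := by
      have := Finset.card_le_card hVsub
      rwa [Finset.card_powersetCard, Nat.card_Icc, Nat.add_sub_cancel] at this
    have hchoosepos : 0 < n.choose (m' + 1) := Nat.choose_pos (le_trans hm'le hmn)
    have hkappa0 : 0 ≤ Real.log (n.choose (m' + 1)) - Real.log V.card := by
      have : (V.card : ℝ) ≤ (n.choose (m' + 1) : ℝ) := by exact_mod_cast hVle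
      have := Real.log_le_log (by exact_mod_cast hV1) this
      linarith
    -- maximal pairwise-disjoint subfamily
    set F := V.powerset.filter (fun M => ∀ a ∈ M, ∀ b ∈ M, a ≠ b → Disjoint a b) with hF
    have hFne : F.Nonempty := by
      refine ⟨∅, ?_⟩
      simp [hF]
    obtain ⟨M₀, hM₀F, hmax⟩ := F.exists_max_image (fun M => M.card) hFne
    rw [hF, Finset.mem_filter, Finset.mem_powerset] at hM₀F
    obtain ⟨hM₀V, hM₀pd⟩ := hM₀F
    by_cases hbig : D ≤ M₀.card
    · exact ⟨∅, M₀, Finset.empty_subset _, by simpa using hkappa0, hbig, hM₀pd,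
        fun v hv => ⟨Finset.disjoint_empty_right v, by simpa using hM₀V hv⟩⟩
    · -- covering argument
      push_neg at hbig
      set W := M₀.biUnion id with hW
      have hcover : V ⊆ W.biUnion (fun x => V.filter (fun S => x ∈ S)) := by
        intro S hS
        have hScard : S.card = m' + 1 := (hVmem S hS).2
        by_cases hint : ∃ x ∈ W, x ∈ S
        · obtain ⟨x, hxW, hxS⟩ := hint
          exact Finset.mem_biUnion.mpr ⟨x, hxW, Finset.mem_filter.mpr ⟨hS, hxS⟩⟩
        · exfalso
          push_neg at hint
          have hSdisj : ∀ T ∈ M₀, Disjoint S T := by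
            intro T hT
            rw [Finset.disjoint_left]
            intro a haS haT
            exact hint a (Finset.mem_biUnion.mpr ⟨T, hT, haT⟩) haS
          have hSnotM : S ∉ M₀ := by
            intro hSM
            have := hSdisj S hSM
            rw [disjoint_self] at this
            simp [this] at hScard
          have hinsF : insert S M₀ ∈ F := by
            rw [hF, Finset.mem_filter, Finset.mem_powerset]
            refine ⟨Finset.insert_subset hS hM₀V, ?_⟩
            intro a ha b hb hab
            rcases Finset.mem_insert.mp ha with ha1 | ha1
            · rcases Finset.mem_insert.mp hb with hb1 | hb1
              · exact absurd (ha1.trans hb1.symm) hab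
              · rw [ha1]; exact hSdisj b hb1
            · rcases Finset.mem_insert.mp hb with hb1 | hb1
              · rw [hb1]; exact (hSdisj a ha1).symm
              · exact hM₀pd a ha1 b hb1 hab
          have := hmax _ hinsF
          rw [Finset.card_insert_of_notMem hSnotM] at this
          omega
      have hsum : V.card ≤ ∑ x ∈ W, (V.filter (fun S => x ∈ S)).card :=
        le_trans (Finset.card_le_card hcover) Finset.card_biUnion_le
      have hWne : W.Nonempty := by
        rcases Finset.eq_empty_or_nonempty W with h | h
        · rw [h, Finset.sum_empty] at hsum; omega
        · exact h
      -- pigeonhole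
      have hpigeon : ∃ x ∈ W, V.card ≤ W.card * (V.filter (fun S => x ∈ S)).card := by
        by_contra h
        push_neg at h
        have hlt : ∑ x ∈ W, W.card * (V.filter (fun S => x ∈ S)).card < ∑ x ∈ W, V.card :=
          Finset.sum_lt_sum_of_nonempty hWne h
        rw [← Finset.mul_sum, Finset.sum_const, smul_eq_mul] at hlt
        nlinarith [hsum, Nat.mul_le_mul_left W.card hsum]
      obtain ⟨x, hxW, hxcount⟩ := hpigeon
      -- W is small
      have hWcard : W.card ≤ D * m := by
        have h1 : W.card ≤ ∑ T ∈ M₀, (id T).card := Finset.card_biUnion_le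
        have h2 : ∑ T ∈ M₀, (id T).card ≤ M₀.card * (m' + 1) := by
          have := Finset.sum_le_card_nsmul M₀ (fun T => (id T).card) (m' + 1)
            (fun T hT => le_of_eq ((hVmem T (hM₀V hT)).2))
          simpa [smul_eq_mul] using this
        have h3 : M₀.card * (m' + 1) ≤ D * m := Nat.mul_le_mul (le_of_lt hbig) hm'le
        omega
      have hxIcc : x ∈ Finset.Icc 1 n := by
        obtain ⟨T, hT, hxT⟩ := Finset.mem_biUnion.mp hxW
        exact (hVmem T (hM₀V hT)).1 hxT
      set Vx := V.filter (fun S => x ∈ S) with hVx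
      have hVxcount : V.card ≤ D * m * Vx.card := by
        calc V.card ≤ W.card * Vx.card := hxcount
          _ ≤ D * m * Vx.card := Nat.mul_le_mul_right _ hWcard
      have hVx1 : 1 ≤ Vx.card := by
        rcases Nat.eq_zero_or_pos Vx.card with h | h
        · rw [h, Nat.mul_zero] at hVxcount; omega
        · exact h
      -- the link family
      set V' := Vx.image (fun S => S.erase x) with hV'
      have hVxmem : ∀ S ∈ Vx, x ∈ S ∧ S ∈ V := by
        intro S hS; rw [hVx, Finset.mem_filter] at hS; exact ⟨hS.2, hS.1⟩
      have hV'card : V'.card = Vx.card := by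
        apply Finset.card_image_of_injOn
        intro a ha b hb hab
        have hxa := (hVxmem a ha).1
        have hxb := (hVxmem b hb).1
        have heq : a.erase x = b.erase x := hab
        rw [← Finset.insert_erase hxa, ← Finset.insert_erase hxb, heq]
      have hV'ne : V'.Nonempty := Finset.card_pos.mp (by omega)
      have hV'sub : V' ⊆ (Finset.Icc 1 n).powersetCard m' := by
        intro v hv
        obtain ⟨S, hS, rfl⟩ := Finset.mem_image.mp hv
        obtain ⟨hxS, hSV⟩ := hVxmem S hS
        rw [Finset.mem_powersetCard]
        refine ⟨le_trans (Finset.erase_subset x S) (hVmem S hSV).1, ?_⟩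
        rw [Finset.card_erase_of_mem hxS, (hVmem S hSV).2]
        omega
      -- the key sparsity inequality
      have hchoose'pos : 0 < n.choose m' := Nat.choose_pos (by omega)
      have hmul : (n.choose m' : ℝ) * V.card * η ≤ (n.choose (m' + 1) : ℝ) * Vx.card := by
        have hid : (n.choose (m' + 1) : ℝ) * (m' + 1) = (n.choose m' : ℝ) * ((n : ℝ) - m') := by
          have h := Nat.choose_succ_right_eq n m'
          rw [← Nat.cast_sub (show m' ≤ n by omega)]
          exact_mod_cast h
        have hdrop0 := hdrop (m' + 1) (by omega) hm'le
        have hdrop' : (D : ℝ) * m * ((m' : ℝ) + 1) * η ≤ (n : ℝ) - m' := by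
          push_cast at hdrop0; linarith
        -- n.choose m' * (D * m * (m'+1)) * η ≤ n.choose m' * (n - m') = n.choose (m'+1) * (m'+1)
        have h1 : (n.choose m' : ℝ) * (((D : ℝ) * m * (m' + 1)) * η) ≤
            (n.choose (m' + 1) : ℝ) * (m' + 1) := by
          rw [hid]
          exact mul_le_mul_of_nonneg_left hdrop' (by positivity)
        have hVR : (V.card : ℝ) ≤ (D : ℝ) * m * Vx.card := by exact_mod_cast hVxcount
        have hη0 : (0 : ℝ) < η := lt_trans one_pos hη
        have hc0 : (0 : ℝ) < (n.choose m' : ℝ) := by exact_mod_cast hchoose'pos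
        have hVx0 : (0 : ℝ) < (Vx.card : ℝ) := by exact_mod_cast hVx1
        have hm'1 : (0 : ℝ) < ((m' : ℝ) + 1) := by positivity
        -- divide h1 by (m'+1), multiply by Vx.card
        have h2 : (n.choose m' : ℝ) * ((D : ℝ) * m) * η ≤ (n.choose (m' + 1) : ℝ) := by
          rw [← mul_le_mul_iff_of_pos_right hm'1]
          calc (n.choose m' : ℝ) * ((D : ℝ) * m) * η * ((m' : ℝ) + 1)
              = (n.choose m' : ℝ) * (((D : ℝ) * m * (m' + 1)) * η) := by ring
            _ ≤ (n.choose (m' + 1) : ℝ) * (m' + 1) := h1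
        calc (n.choose m' : ℝ) * V.card * η ≤ (n.choose m' : ℝ) * ((D : ℝ) * m * Vx.card) * η :=
              mul_le_mul_of_nonneg_right (mul_le_mul_of_nonneg_left hVR (le_of_lt hc0))
                (le_of_lt hη0)
          _ = ((n.choose m' : ℝ) * ((D : ℝ) * m) * η) * Vx.card := by ring
          _ ≤ (n.choose (m' + 1) : ℝ) * Vx.card :=
              mul_le_mul_of_nonneg_right h2 (le_of_lt hVx0)
      have hlogstep : Real.log (n.choose m') - Real.log V'.card ≤
          (Real.log (n.choose (m' + 1)) - Real.log V.card) - Real.log η := by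
        have hc0 : (0 : ℝ) < (n.choose m' : ℝ) := by exact_mod_cast hchoose'pos
        have hc1 : (0 : ℝ) < (n.choose (m' + 1) : ℝ) := by exact_mod_cast hchoosepos
        have hV0 : (0 : ℝ) < (V.card : ℝ) := by exact_mod_cast hV1
        have hVx0 : (0 : ℝ) < (Vx.card : ℝ) := by exact_mod_cast hVx1
        have hη0 : (0 : ℝ) < η := lt_trans one_pos hη
        have hlogle := Real.log_le_log (by positivity) hmul
        rw [Real.log_mul (by positivity) (ne_of_gt hη0), Real.log_mul (ne_of_gt hc0) (ne_of_gt hV0),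
          Real.log_mul (ne_of_gt hc1) (ne_of_gt hVx0)] at hlogle
        rw [hV'card]
        linarith
      have hbudget' : Real.log (n.choose m') - Real.log V'.card ≤
          K - ((m : ℝ) - m') * Real.log η := by
        have : ((m : ℝ) - (m' + 1)) * Real.log η + Real.log η = ((m : ℝ) - m') * Real.log η := by
          push_cast; ring
        push_cast at hbudget
        linarith [hlogstep, hbudget]
      -- m' ≥ 1
      have hkappa'0 : 0 ≤ Real.log (n.choose m') - Real.log V'.card := by
        have hV'le : V'.card ≤ n.choose m' := by
          have := Finset.card_le_card hV'sub
          rwa [Finset.card_powersetCard, Nat.card_Icc, Nat.add_sub_cancel] at this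
        have h1 : (1 : ℝ) ≤ (V'.card : ℝ) := by rw [hV'card]; exact_mod_cast hVx1
        have := Real.log_le_log (by linarith) (show (V'.card : ℝ) ≤ (n.choose m' : ℝ) by exact_mod_cast hV'le)
        linarith
      have hm'1 : 1 ≤ m' := by
        by_contra h
        push_neg at h
        interval_cases m'
        have h1 : ((m : ℝ) - 0) * Real.log η ≤ K := by
          have := hbudget'
          push_cast at this
          linarith
        have h2 : (m : ℝ) ≤ K / Real.log η := by
          rw [le_div_iff₀ hlogη]
          simpa using h1
        have h3 : (m : ℝ) ≤ (m : ℝ) / 2 := le_trans h2 hKm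
        have h4 : (2 : ℝ) ≤ (m : ℝ) := by exact_mod_cast hm2
        linarith
      -- apply induction hypothesis
      obtain ⟨C', M, hC'Icc, hC'card, hMcard, hMpd, hMmem⟩ :=
        ih (by omega) V' hV'ne hV'sub hm'1 hbudget'
      -- x ∉ C'
      have hMne : M.Nonempty := Finset.card_pos.mp (by omega)
      obtain ⟨v₀, hv₀⟩ := hMne
      have hxnotin : ∀ v ∈ M, x ∉ v ∪ C' := by
        intro v hv hxv
        obtain ⟨_, hvC'⟩ := hMmem v hv
        obtain ⟨S, hS, hSe⟩ := Finset.mem_image.mp hvC'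
        rw [← hSe] at hxv
        exact Finset.notMem_erase x S hxv
      have hxC' : x ∉ C' := fun h => hxnotin v₀ hv₀ (Finset.mem_union_right _ h)
      refine ⟨insert x C', M, Finset.insert_subset hxIcc hC'Icc, ?_, hMcard, hMpd, ?_⟩
      · rw [Finset.card_insert_of_notMem hxC']
        push_cast
        have := hC'card
        linarith [hlogstep]
      · intro v hv
        obtain ⟨hdisj, hvC'⟩ := hMmem v hv
        have hxv : x ∉ v := fun h => hxnotin v hv (Finset.mem_union_left _ h)
        refine ⟨Finset.disjoint_insert_right.mpr ⟨hxv, hdisj⟩, ?_⟩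
        obtain ⟨S, hS, hSe⟩ := Finset.mem_image.mp hvC'
        have hxS := (hVxmem S hS).1
        rw [Finset.union_insert, ← hSe, Finset.insert_erase hxS]
        exact (hVxmem S hS).2

set_option maxHeartbeats 1000000 in
theorem stmt_17 :
    ∃ c : ℝ, 0 < c ∧ c < 1 / 2 ∧ ∃ η₀ : ℝ, 1 ≤ η₀ ∧ ∃ n₀ : ℕ,
      ∀ n : ℕ, n₀ ≤ n → ∀ m : ℕ, 2 ≤ m →
      ∀ η : ℝ, η₀ ≤ η → (m : ℝ) ^ 2 * η * Real.log n ≤ c * n →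
      ∀ U : Finset (Finset ℕ), U.Nonempty → U ⊆ (Finset.Icc 1 n).powersetCard m →
      sparsity n m U ≤ c * m * Real.log η →
      ∃ (Δ : ℕ) (f : Fin Δ → Finset ℕ) (c₀ : Finset ℕ),
        (Δ : ℝ) ≥ c * n / ((m : ℝ) ^ 2 * η * Real.log n) ∧
        c₀ ⊆ Finset.Icc 1 n ∧
        (c₀.card : ℝ) ≤ 2 * sparsity n m U / Real.log η ∧
        Function.Injective f ∧
        (∀ i, f i ∈ U) ∧
        (∀ i j, i ≠ j → f i ∩ f j = c₀) := by
  have hexp1 : Real.exp 1 < 3 := by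
    have h := Real.exp_one_lt_d9; norm_num at h ⊢; linarith
  refine ⟨1/100, by norm_num, by norm_num, Real.exp 1, ?_, 100, ?_⟩
  · nlinarith [Real.exp_pos 1, Real.add_one_le_exp 1]
  intro n hn m hm2 η hη₀ hyp U hUne hUsub hκ
  have hn100 : (100 : ℝ) ≤ (n : ℝ) := by exact_mod_cast hn
  have hn0 : (0 : ℝ) < n := by linarith
  have hm0 : (0 : ℝ) < m := by positivity
  have hm2R : (2 : ℝ) ≤ (m : ℝ) := by exact_mod_cast hm2
  have hη1 : 1 < η := by nlinarith [Real.add_one_le_exp 1]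
  have hη0 : (0 : ℝ) < η := by linarith
  have hlogn1 : 1 ≤ Real.log n := by
    rw [Real.le_log_iff_exp_le hn0]; linarith
  have hlogn0 : (0 : ℝ) < Real.log n := by linarith
  have hlogη1 : 1 ≤ Real.log η := by
    rw [Real.le_log_iff_exp_le hη0]; exact hη₀
  have hlogη0 : (0 : ℝ) < Real.log η := by linarith
  have hden : (0 : ℝ) < (m : ℝ) ^ 2 * η * Real.log n := by positivity
  have hηln1 : 1 ≤ η * Real.log n := by nlinarith
  have hmsq : (m : ℝ) ^ 2 ≤ (n : ℝ) / 100 := by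
    nlinarith [mul_le_mul_of_nonneg_left hηln1 (sq_nonneg (m : ℝ)), hyp]
  have hmnR : (m : ℝ) ≤ (n : ℝ) / 200 := by nlinarith
  have hmn : m ≤ n := by
    have : (m : ℝ) ≤ (n : ℝ) := by linarith
    exact_mod_cast this
  obtain ⟨r, hrdef⟩ : ∃ r : ℝ, r = 1 / 100 * (n : ℝ) / ((m : ℝ) ^ 2 * η * Real.log n) :=
    ⟨_, rfl⟩
  have hr1 : 1 ≤ r := by rw [hrdef]; exact (one_le_div hden).mpr (by linarith [hyp])
  have hr0 : 0 ≤ r := by linarith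
  obtain ⟨D, hDdef⟩ : ∃ D : ℕ, D = ⌈r⌉₊ := ⟨_, rfl⟩
  have hrD : r ≤ (D : ℝ) := by rw [hDdef]; exact Nat.le_ceil r
  have hD2r : (D : ℝ) ≤ 2 * r := by
    have := Nat.ceil_lt_add_one hr0
    rw [hDdef]
    linarith
  have hD1 : 1 ≤ D := by
    have : (1 : ℝ) ≤ (D : ℝ) := by linarith
    exact_mod_cast this
  have hrid : r * ((m : ℝ) ^ 2 * η * Real.log n) = 1 / 100 * (n : ℝ) := by
    rw [hrdef]; exact div_mul_cancel₀ _ (ne_of_gt hden)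
  set K : ℝ := sparsity n m U with hK
  have hKm : K / Real.log η ≤ (m : ℝ) / 2 := by
    rw [div_le_iff₀ hlogη0]
    have : K ≤ 1 / 100 * m * Real.log η := hκ
    nlinarith
  have hdrop : ∀ m' : ℕ, 1 ≤ m' → m' ≤ m →
      ((D : ℝ) * m * m') * η ≤ (n : ℝ) - m' + 1 := by
    intro m' _ hm'm
    have hm'R : (m' : ℝ) ≤ (m : ℝ) := by exact_mod_cast hm'm
    have hm'0 : (0 : ℝ) ≤ (m' : ℝ) := by positivity
    have e1 : (D : ℝ) * m * m' * η ≤ (2 * r) * m * m * η := by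
      have h1 : (D : ℝ) * m * m' ≤ (2 * r) * m * m := by
        have a1 : (D : ℝ) * ((m : ℝ) * m') ≤ (2 * r) * ((m : ℝ) * m') :=
          mul_le_mul_of_nonneg_right hD2r (by positivity)
        have a2 : (2 * r) * ((m : ℝ) * m') ≤ (2 * r) * ((m : ℝ) * m) :=
          mul_le_mul_of_nonneg_left (mul_le_mul_of_nonneg_left hm'R hm0.le) (by linarith)
        nlinarith [a1, a2]
      exact mul_le_mul_of_nonneg_right h1 (le_of_lt hη0)
    have hX0 : (0 : ℝ) ≤ (2 * r) * m * m * η := by positivity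
    have e2 : ((2 * r) * m * m * η) * Real.log n = 2 * (1 / 100 * (n : ℝ)) := by
      linear_combination 2 * hrid
    have e3 : (2 * r) * m * m * η ≤ (n : ℝ) / 50 := by nlinarith
    linarith
  have key := sunflower_key n m D η K hη1 hmn hm2 hD1 hKm hdrop m le_rfl U hUne hUsub
    (by omega) (by
      have : ((m : ℝ) - (m : ℝ)) * Real.log η = 0 := by ring
      rw [this, sub_zero]
      exact le_of_eq rfl)
  obtain ⟨C, M, hCIcc, hCcard, hMcard, hMpd, hMmem⟩ := key
  have hMcardR : r ≤ (M.card : ℝ) := by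
    have : (D : ℝ) ≤ (M.card : ℝ) := by exact_mod_cast hMcard
    linarith
  rw [← hrdef]
  refine ⟨M.card, fun i => (M.equivFin.symm i : Finset ℕ) ∪ C, C, hMcardR, hCIcc, ?_, ?_, ?_, ?_⟩
  · -- core cardinality bound
    have hS0 : 0 ≤ sparsity n m U := by
      have hU1 : 1 ≤ U.card := Finset.card_pos.mpr hUne
      have hUle : U.card ≤ n.choose m := by
        have := Finset.card_le_card hUsub
        rwa [Finset.card_powersetCard, Nat.card_Icc, Nat.add_sub_cancel] at this
      have := Real.log_le_log (by exact_mod_cast hU1)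
        (show (U.card : ℝ) ≤ (n.choose m : ℝ) by exact_mod_cast hUle)
      simpa [sparsity] using this
    rw [le_div_iff₀ hlogη0]
    have : (C.card : ℝ) * Real.log η ≤ sparsity n m U := hCcard
    linarith
  · -- injectivity
    intro i j hij
    set vi := M.equivFin.symm i with hvi
    set vj := M.equivFin.symm j with hvj
    have hdi : Disjoint (vi : Finset ℕ) C := (hMmem _ vi.2).1
    have hdj : Disjoint (vj : Finset ℕ) C := (hMmem _ vj.2).1
    have hvv : (vi : Finset ℕ) = (vj : Finset ℕ) := by
      have h1 : ((vi : Finset ℕ) ∪ C) \ C = ((vj : Finset ℕ) ∪ C) \ C :=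
        congrArg (fun s => s \ C) hij
      rwa [Finset.union_sdiff_cancel_right hdi, Finset.union_sdiff_cancel_right hdj] at h1
    exact M.equivFin.symm.injective (Subtype.ext hvv)
  · intro i
    exact (hMmem _ (M.equivFin.symm i).2).2
  · intro i j hij
    set vi := M.equivFin.symm i with hvi
    set vj := M.equivFin.symm j with hvj
    have hne : (vi : Finset ℕ) ≠ (vj : Finset ℕ) := by
      intro h
      exact hij (M.equivFin.symm.injective (Subtype.ext h))
    have hdisjij : Disjoint (vi : Finset ℕ) (vj : Finset ℕ) := hMpd _ vi.2 _ vj.2 hne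
    ext a
    simp only [Finset.mem_inter, Finset.mem_union]
    constructor
    · rintro ⟨hi | hi, hj | hj⟩
      · exact absurd hj (Finset.disjoint_left.mp hdisjij hi)
      · exact hj
      · exact hi
      · exact hi
    · intro h
      exact ⟨Or.inr h, Or.inr h⟩
end

section
/- Let n, r, L be natural numbers with 2 ≤ r ≤ n, set N₀ = C(n, 2) and R = C(r, 2), and suppose L ≤ N₀. Then the number of edge sets s ⊆ C([n], 2) with |s| = N₀ − L that contain all edges of some r-clique is at most C(n, r) · C(N₀, L) · e^{−L·R/N₀}. -/
open scoped Classical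

lemma aux_count_19 {X : Type*} [DecidableEq X] (E T : Finset X) (hTE : T ⊆ E) (k : ℕ) :
    ((E.powersetCard k).filter (fun s => T ⊆ s)).card ≤ (E.card - T.card).choose (k - T.card) := by
  have := Finset.card_le_card_of_injOn (s := (E.powersetCard k).filter (fun s => T ⊆ s))
    (t := (E \ T).powersetCard (k - T.card)) (fun s => s \ T) ?_ ?_
  · rwa [Finset.card_powersetCard, Finset.card_sdiff_of_subset hTE] at this
  · intro s hs
    simp only [Finset.mem_coe, Finset.mem_filter, Finset.mem_powersetCard] at hs ⊢
    obtain ⟨⟨hsE, hsc⟩, hTs⟩ := hs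
    refine ⟨fun x hx => ?_, ?_⟩
    · simp only [Finset.mem_sdiff] at hx ⊢
      exact ⟨hsE hx.1, hx.2⟩
    · rw [Finset.card_sdiff_of_subset hTs, hsc]
  · intro s hs t ht h
    simp only [Finset.coe_filter, Set.mem_setOf_eq, Finset.mem_powersetCard] at hs ht
    have : s \ T ∪ T = t \ T ∪ T := by simp only at h; rw [h]
    rwa [Finset.sdiff_union_of_subset hs.2, Finset.sdiff_union_of_subset ht.2] at this

lemma aux_ratio_19 (m R : ℕ) (hR : R ≤ m) (hm : 0 < m) :
    ∀ L : ℕ, (((m - R).choose L : ℝ)) ≤ (m.choose L : ℝ) * (((m : ℝ) - R) / m) ^ L := by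
  intro L
  induction L with
  | zero => simp
  | succ L ih =>
    have hq0 : (0:ℝ) ≤ ((m : ℝ) - R) / m := by
      apply div_nonneg _ (by positivity)
      have : (R:ℝ) ≤ m := by exact_mod_cast hR
      linarith
    by_cases h : m - R ≤ L
    · have : (m - R).choose (L+1) = 0 := Nat.choose_eq_zero_of_lt (by omega)
      rw [this]
      push_cast
      positivity
    · push_neg at h
      have hLm : L < m := by omega
      have hLR : L + R ≤ m := by omega
      have e1 : ((m - R).choose (L+1) : ℝ) * (L+1) = ((m - R).choose L : ℝ) * ((m:ℝ) - R - L) := by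
        have := Nat.choose_succ_right_eq (m - R) L
        calc ((m - R).choose (L+1) : ℝ) * (L+1)
            = (((m - R).choose (L+1) * (L+1) : ℕ) : ℝ) := by push_cast; ring
          _ = (((m - R).choose L * (m - R - L) : ℕ) : ℝ) := by rw [this]
          _ = ((m - R).choose L : ℝ) * ((m:ℝ) - R - L) := by
              push_cast [Nat.cast_sub (by omega : L ≤ m - R), Nat.cast_sub hR]; ring
      have e2 : (m.choose (L+1) : ℝ) * (L+1) = (m.choose L : ℝ) * ((m:ℝ) - L) := by
        have := Nat.choose_succ_right_eq m L
        calc (m.choose (L+1) : ℝ) * (L+1)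
            = ((m.choose (L+1) * (L+1) : ℕ) : ℝ) := by push_cast; ring
          _ = ((m.choose L * (m - L) : ℕ) : ℝ) := by rw [this]
          _ = (m.choose L : ℝ) * ((m:ℝ) - L) := by
              push_cast [Nat.cast_sub hLm.le]; ring
      have hmR : (0:ℝ) < m := by exact_mod_cast hm
      have key : ((m:ℝ) - R - L) * m ≤ ((m:ℝ) - L) * ((m:ℝ) - R) := by
        have hR' : (0:ℝ) ≤ R := by positivity
        have hL' : (0:ℝ) ≤ L := by positivity
        nlinarith
      have hb : (0:ℝ) ≤ (m.choose L : ℝ) := by positivity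
      have hsub : (0:ℝ) ≤ (m:ℝ) - R - L := by
        have : (L:ℝ) + R ≤ m := by exact_mod_cast hLR
        linarith
      rw [pow_succ]
      have hL1 : (0:ℝ) < (L:ℝ) + 1 := by positivity
      rw [← mul_le_mul_iff_of_pos_right hL1]
      calc ((m - R).choose (L+1) : ℝ) * ((L:ℝ)+1)
          = ((m - R).choose L : ℝ) * ((m:ℝ) - R - L) := e1
        _ ≤ (m.choose L : ℝ) * (((m : ℝ) - R) / m) ^ L * ((m:ℝ) - R - L) := by
            apply mul_le_mul_of_nonneg_right ih hsub
        _ ≤ (m.choose L : ℝ) * (((m : ℝ) - R) / m) ^ L * (((m:ℝ) - L) * (((m:ℝ) - R)/m)) := by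
            apply mul_le_mul_of_nonneg_left _ (by positivity)
            rw [mul_div_assoc', le_div_iff₀ hmR]
            exact key
        _ = (m.choose L : ℝ) * ((m:ℝ) - L) * ((((m : ℝ) - R) / m) ^ L * (((m:ℝ) - R)/m)) := by ring
        _ = (m.choose (L+1) : ℝ) * ((L:ℝ)+1) * ((((m : ℝ) - R) / m) ^ L * (((m:ℝ) - R)/m)) := by rw [e2]
        _ = (m.choose (L+1) : ℝ) * ((((m : ℝ) - R) / m) ^ L * (((m:ℝ) - R)/m)) * ((L:ℝ)+1) := by ring

lemma aux_exp_19 (m R L : ℕ) (hR : R ≤ m) (hm : 0 < m) :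
    (((m : ℝ) - R) / m) ^ L ≤ Real.exp (-((L : ℝ) * R / m)) := by
  have hmR : (0:ℝ) < m := by exact_mod_cast hm
  have hR' : (R:ℝ) ≤ m := by exact_mod_cast hR
  have h1 : (((m : ℝ) - R) / m) ≤ Real.exp (-((R:ℝ)/m)) := by
    have := Real.add_one_le_exp (-((R:ℝ)/m))
    have h2 : ((m : ℝ) - R) / m = -((R:ℝ)/m) + 1 := by field_simp; ring
    linarith
  have hq0 : (0:ℝ) ≤ ((m : ℝ) - R) / m := by
    apply div_nonneg _ hmR.le; linarith
  calc (((m : ℝ) - R) / m) ^ L ≤ (Real.exp (-((R:ℝ)/m))) ^ L := pow_le_pow_left₀ hq0 h1 L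
    _ = Real.exp (-((R:ℝ)/m) * L) := by rw [← Real.exp_nat_mul]; ring_nf
    _ = Real.exp (-((L : ℝ) * R / m)) := by ring_nf

theorem stmt_19 (n r L : ℕ) (hr2 : 2 ≤ r) (hrn : r ≤ n)
    (hL : L ≤ n.choose 2) :
    (((((Finset.Icc 1 n).powersetCard 2).powersetCard (n.choose 2 - L)).filter
        (fun s => ∃ v ∈ (Finset.Icc 1 n).powersetCard r,
          v.powersetCard 2 ⊆ s)).card : ℝ) ≤
      (n.choose r : ℝ) * ((n.choose 2).choose L : ℝ) *
        Real.exp (-((L : ℝ) * (r.choose 2 : ℝ) / (n.choose 2 : ℝ))) := by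
  set N := n.choose 2 with hN
  set R := r.choose 2 with hRdef
  set E := (Finset.Icc 1 n).powersetCard 2 with hEdef
  set V := (Finset.Icc 1 n).powersetCard r with hVdef
  set S := E.powersetCard (N - L) with hSdef
  have hn2 : 2 ≤ n := hr2.trans hrn
  have hIcc : (Finset.Icc 1 n).card = n := by rw [Nat.card_Icc]; omega
  have hEcard : E.card = N := by rw [hEdef, Finset.card_powersetCard, hIcc]
  have hVcard : V.card = n.choose r := by rw [hVdef, Finset.card_powersetCard, hIcc]
  have hRN : R ≤ N := Nat.choose_le_choose 2 hrn
  have hNpos : 0 < N := Nat.choose_pos hn2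
  -- Step 1: filter ⊆ biUnion
  have hsub : S.filter (fun s => ∃ v ∈ V, v.powersetCard 2 ⊆ s) ⊆
      V.biUnion (fun v => S.filter (fun s => v.powersetCard 2 ⊆ s)) := by
    intro s hs
    simp only [Finset.mem_filter, Finset.mem_biUnion] at hs ⊢
    obtain ⟨hsS, v, hv, hvs⟩ := hs
    exact ⟨v, hv, hsS, hvs⟩
  -- Step 2: per-clique bound
  have hper : ∀ v ∈ V, (S.filter (fun s => v.powersetCard 2 ⊆ s)).card ≤ (N - R).choose L := by
    intro v hv
    rw [hVdef, Finset.mem_powersetCard] at hv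
    have hvcard : (v.powersetCard 2).card = R := by
      rw [Finset.card_powersetCard, hv.2]
    have hTE : v.powersetCard 2 ⊆ E := Finset.powersetCard_mono hv.1
    by_cases hcase : L + R ≤ N
    · have := aux_count_19 E (v.powersetCard 2) hTE (N - L)
      rw [hEcard, hvcard] at this
      have heq : (N - L) - R = (N - R) - L := by omega
      rw [heq, Nat.choose_symm (by omega : L ≤ N - R)] at this
      exact this
    · have : S.filter (fun s => v.powersetCard 2 ⊆ s) = ∅ := by
        rw [Finset.eq_empty_iff_forall_notMem]
        intro s hs
        simp only [Finset.mem_filter, hSdef, Finset.mem_powersetCard] at hs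
        obtain ⟨⟨_, hscard⟩, hTs⟩ := hs
        have := Finset.card_le_card hTs
        rw [hvcard, hscard] at this
        omega
      rw [this]
      simp
  -- Combine: nat bound
  have hnat : (S.filter (fun s => ∃ v ∈ V, v.powersetCard 2 ⊆ s)).card ≤
      n.choose r * (N - R).choose L := by
    calc (S.filter (fun s => ∃ v ∈ V, v.powersetCard 2 ⊆ s)).card
        ≤ (V.biUnion (fun v => S.filter (fun s => v.powersetCard 2 ⊆ s))).card :=
          Finset.card_le_card hsub
      _ ≤ ∑ v ∈ V, (S.filter (fun s => v.powersetCard 2 ⊆ s)).card := Finset.card_biUnion_le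
      _ ≤ ∑ _v ∈ V, (N - R).choose L := Finset.sum_le_sum hper
      _ = n.choose r * (N - R).choose L := by rw [Finset.sum_const, smul_eq_mul, hVcard]
  -- Real estimate
  have hreal : (((N - R).choose L : ℕ) : ℝ) ≤ (N.choose L : ℝ) *
      Real.exp (-((L : ℝ) * R / N)) := by
    calc (((N - R).choose L : ℕ) : ℝ)
        ≤ (N.choose L : ℝ) * (((N : ℝ) - R) / N) ^ L := aux_ratio_19 N R hRN hNpos L
      _ ≤ (N.choose L : ℝ) * Real.exp (-((L : ℝ) * R / N)) := by
          apply mul_le_mul_of_nonneg_left (aux_exp_19 N R L hRN hNpos) (by positivity)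
  have hfinal : ((S.filter (fun s => ∃ v ∈ V, v.powersetCard 2 ⊆ s)).card : ℝ) ≤
      (n.choose r : ℝ) * (N.choose L : ℝ) * Real.exp (-((L : ℝ) * (R : ℝ) / (N : ℝ))) := by
    calc ((S.filter (fun s => ∃ v ∈ V, v.powersetCard 2 ⊆ s)).card : ℝ)
      ≤ ((n.choose r * (N - R).choose L : ℕ) : ℝ) := by exact_mod_cast hnat
      _ = (n.choose r : ℝ) * (((N - R).choose L : ℕ) : ℝ) := by push_cast; ring
      _ ≤ (n.choose r : ℝ) * ((N.choose L : ℝ) * Real.exp (-((L : ℝ) * R / N))) :=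
        mul_le_mul_of_nonneg_left hreal (by positivity)
      _ = (n.choose r : ℝ) * (N.choose L : ℝ) * Real.exp (-((L : ℝ) * (R : ℝ) / (N : ℝ))) := by ring
  convert hfinal using 4
end
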